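/- arXiv:2412.02422 — 3 statements merged into one kernel-verified Lean document; each statement's English description precedes it below -/
import Mathlib

section
/- Let n > q > 0 be coprime and let n/q = [[b_1, ..., b_r]] and n/(n−q) = [[b'_1, ..., b'_s]] be the Hirzebruch–Jung continued fraction expansions (with all partial quotients ≥ 2). Then s = (Σ_{i=1}^r b_i) − 2r + 1. -/
/-- Value of the Hirzebruch–Jung continued fraction `[[b_1, …, b_r]]
= b_1 − 1/(b_2 − 1/(… − 1/b_r))`, given as a list of partial quotients.
(Note that `hj [b] = b` since `0⁻¹ = 0` in `ℚ`.) -/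
def hj : List ℚ → ℚ
  | [] => 0
  | b :: l => b - (hj l)⁻¹


lemma hjAux_cons (a : ℚ) (l : List ℚ) : hj (a :: l) = a - (hj l)⁻¹ := rfl

def mc (l : List ℤ) : List ℚ := List.map (fun x : ℤ => (x:ℚ)) l

lemma hjAux_mapcast0 : ∀ l : List ℤ, (l.map fun x => (x:ℚ)) = List.map (fun x : ℤ => (x:ℚ)) l := by
  intro l; induction l with
  | nil => rfl
  | cons a t ih => simp only [List.map_cons, ← ih]; rfl

lemma hjAux_mapcast (l : List ℤ) : (l.map fun x => (x:ℚ)) = mc l := hjAux_mapcast0 l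

lemma mc_cons (a : ℤ) (l : List ℤ) : mc (a :: l) = (a : ℚ) :: mc l := rfl

lemma hj_gt_one : ∀ (l : List ℤ), l ≠ [] → (∀ x ∈ l, 2 ≤ x) → 1 < hj (mc l)
  | [], hne, _ => absurd rfl hne
  | a :: t, _, h2 => by
    rw [mc_cons, hjAux_cons]
    have ha : (2:ℚ) ≤ a := by exact_mod_cast h2 a (by simp)
    rcases eq_or_ne t [] with rfl | ht
    · show (1:ℚ) < a - (hj [])⁻¹
      simp [hj]; linarith
    · have h := hj_gt_one t ht (fun x hx => h2 x (by simp [hx]))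
      have hpos : 0 < (hj (mc t))⁻¹ := inv_pos.2 (by linarith)
      have hlt : (hj (mc t))⁻¹ < 1 := by
        rw [inv_lt_one_iff₀]; right; exact h
      linarith

lemma hj_inv_bounds (l : List ℤ) (h2 : ∀ x ∈ l, 2 ≤ x) :
    0 ≤ (hj (mc l))⁻¹ ∧ (hj (mc l))⁻¹ < 1 := by
  rcases eq_or_ne l [] with rfl | h
  · simp [hj, mc]
  · have := hj_gt_one l h h2
    exact ⟨le_of_lt (inv_pos.2 (by linarith)), by rw [inv_lt_one_iff₀]; right; exact this⟩

lemma hj_inv_eq_zero (l : List ℤ) (h2 : ∀ x ∈ l, 2 ≤ x) (h : (hj (mc l))⁻¹ = 0) : l = [] := by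
  by_contra hne
  have h1 := hj_gt_one l hne h2
  have : 0 < (hj (mc l))⁻¹ := inv_pos.2 (by linarith)
  linarith [h ▸ this]

lemma hj_replicate : ∀ k : ℕ, hj (mc (List.replicate k 2)) = ((k:ℚ)+1)/(k:ℚ)
  | 0 => by simp [hj, mc]
  | (k+1) => by
    rw [List.replicate_succ, mc_cons, hjAux_cons, hj_replicate k]
    rcases Nat.eq_zero_or_pos k with rfl | hk
    · norm_num
    · have hk' : (0:ℚ) < k := by exact_mod_cast hk
      have hk1 : (0:ℚ) < (k:ℚ)+1 := by linarith
      push_cast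
      rw [inv_div]
      field_simp
      ring

lemma hj_head_eq (a a' : ℤ) (t t' : List ℤ) (ht : ∀ x ∈ t, 2 ≤ x) (ht' : ∀ x ∈ t', 2 ≤ x)
    (h : (a:ℚ) - (hj (mc t))⁻¹ = (a':ℚ) - (hj (mc t'))⁻¹) : a = a' := by
  obtain ⟨h1, h2⟩ := hj_inv_bounds t ht
  obtain ⟨h1', h2'⟩ := hj_inv_bounds t' ht'
  have hlt : ((a:ℚ) - a' : ℚ) < 1 := by linarith
  have hgt : (-1:ℚ) < (a:ℚ) - a' := by linarith
  have hlt' : a - a' < 1 := by exact_mod_cast hlt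
  have hgt' : (-1:ℤ) < a - a' := by exact_mod_cast hgt
  omega

lemma hj_unique : ∀ (l₁ l₂ : List ℤ), (∀ x ∈ l₁, 2 ≤ x) → (∀ x ∈ l₂, 2 ≤ x) →
    hj (mc l₁) = hj (mc l₂) → l₁ = l₂
  | [], [], _, _, _ => rfl
  | [], a :: t, _, h2, heq => by
    exfalso
    have := hj_gt_one (a :: t) (by simp) h2
    rw [← heq] at this
    simp only [mc, List.map_nil] at this
    simp [hj] at this
    norm_num at this
  | a :: t, [], h1, _, heq => by
    exfalso
    have := hj_gt_one (a :: t) (by simp) h1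
    rw [heq] at this
    simp only [mc, List.map_nil] at this
    simp [hj] at this
    norm_num at this
  | a :: t, a' :: t', h1, h2, heq => by
    rw [mc_cons, hjAux_cons, mc_cons, hjAux_cons] at heq
    have ht : ∀ x ∈ t, 2 ≤ x := fun x hx => h1 x (by simp [hx])
    have ht' : ∀ x ∈ t', 2 ≤ x := fun x hx => h2 x (by simp [hx])
    have ha : a = a' := hj_head_eq a a' t t' ht ht' heq
    subst ha
    have hi : (hj (mc t))⁻¹ = (hj (mc t'))⁻¹ := by linarith
    rcases eq_or_ne t [] with rfl | htne
    · have : (hj (mc t'))⁻¹ = 0 := by rw [← hi]; simp [mc, hj]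
      rw [hj_inv_eq_zero t' ht' this]
    · have h1t := hj_gt_one t htne ht
      have hpos : (0:ℚ) < (hj (mc t))⁻¹ := inv_pos.2 (by linarith)
      have ht'ne : t' ≠ [] := by
        intro hh
        rw [hh] at hi
        have hz : (hj (mc t))⁻¹ = 0 := by
          rw [hi]; show (hj [])⁻¹ = 0; simp [hj]
        exact htne (hj_inv_eq_zero t ht hz)
      have h1t' := hj_gt_one t' ht'ne ht'
      have : hj (mc t) = hj (mc t') :=
        inv_injective (by rw [hi])
      rw [hj_unique t t' ht ht' this]

lemma hj_dual_aux : ∀ (N : ℕ) (n q : ℤ), n ≤ (N:ℤ) → 0 < q → q < n → IsCoprime n q →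
    ∀ (b b' : List ℤ), b ≠ [] → b' ≠ [] → (∀ x ∈ b, 2 ≤ x) → (∀ x ∈ b', 2 ≤ x) →
    hj (mc b) = (n:ℚ)/(q:ℚ) → hj (mc b') = (n:ℚ)/((n:ℚ)-(q:ℚ)) →
    (b'.length : ℤ) = b.sum - 2*b.length + 1 := by
  intro N
  induction N with
  | zero => intro n q hN hq hn; exfalso; push_cast at hN; omega
  | succ N ih =>
    intro n q hN hq hn hcop b b' hbne hb'ne hb hb' h1 h2
    obtain ⟨b₁, t, rfl⟩ := List.exists_cons_of_ne_nil hbne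
    obtain ⟨b'₁, t', rfl⟩ := List.exists_cons_of_ne_nil hb'ne
    have hb₁ : 2 ≤ b₁ := hb _ (by simp)
    have hb'₁ : 2 ≤ b'₁ := hb' _ (by simp)
    have hbt : ∀ x ∈ t, 2 ≤ x := fun x hx => hb x (by simp [hx])
    have hbt' : ∀ x ∈ t', 2 ≤ x := fun x hx => hb' x (by simp [hx])
    have hqQ : (0:ℚ) < (q:ℚ) := by exact_mod_cast hq
    have hq0 : (q:ℚ) ≠ 0 := ne_of_gt hqQ
    have hnqQ : (0:ℚ) < (n:ℚ) - (q:ℚ) := by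
      have : (q:ℚ) < (n:ℚ) := by exact_mod_cast hn
      linarith
    have hnq0 : (n:ℚ) - (q:ℚ) ≠ 0 := ne_of_gt hnqQ
    have hnQ : (0:ℚ) < (n:ℚ) := by linarith
    rw [mc_cons, hjAux_cons] at h1 h2
    obtain ⟨hi0, hi1⟩ := hj_inv_bounds t hbt
    obtain ⟨hi0', hi1'⟩ := hj_inv_bounds t' hbt'
    rcases eq_or_ne t [] with rfl | htne
    · -- base case: t = [], so q = 1 and n = b₁
      have hinv : (hj (mc ([]:List ℤ)))⁻¹ = 0 := by
        show (hj [])⁻¹ = 0; simp [hj]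
      rw [hinv, sub_zero] at h1
      have hnb : (n:ℚ) = (b₁:ℚ) * (q:ℚ) := by
        rw [eq_div_iff hq0] at h1; linarith [h1]
      have hdvd : q ∣ n := by
        have hz : (n:ℚ) = (q:ℚ) * (b₁:ℚ) := by rw [hnb]; ring
        exact ⟨b₁, by exact_mod_cast hz⟩
      have hu : IsUnit q := hcop.isUnit_of_dvd' hdvd dvd_rfl
      have hq1 : q = 1 := by
        rcases Int.isUnit_iff.1 hu with h | h <;> omega
      subst hq1
      have hnb₁ : n = b₁ := by
        have hz : (n:ℚ) = (b₁:ℚ) := by rw [hnb]; push_cast; ring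
        exact_mod_cast hz
      subst hnb₁
      -- b' must be replicate (n-1) 2
      set k := (n-1).toNat with hk
      have hkn : (k:ℤ) = n - 1 := Int.toNat_of_nonneg (by omega)
      have hrepval : hj (mc (List.replicate k 2)) = (n:ℚ)/((n:ℚ)-1) := by
        rw [hj_replicate k]
        have : (k:ℚ) = (n:ℚ) - 1 := by exact_mod_cast hkn
        rw [this]; ring_nf
      have heqv : hj (mc (b'₁ :: t')) = hj (mc (List.replicate k 2)) := by
        rw [mc_cons, hjAux_cons, h2, hrepval]; push_cast; ring_nf
      have hbrep := hj_unique (b'₁ :: t') (List.replicate k 2) hb'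
        (by intro x hx; rw [List.eq_of_mem_replicate hx]) heqv
      have hlen : (b'₁ :: t').length = k := by rw [hbrep, List.length_replicate]
      rw [hlen]
      simp only [List.sum_cons, List.sum_nil, List.length_cons, List.length_nil]
      push_cast
      omega
    · -- t ≠ []
      have htj := hj_gt_one t htne hbt
      have hipos : (0:ℚ) < (hj (mc t))⁻¹ := inv_pos.2 (by linarith)
      rcases eq_or_lt_of_le hb₁ with hb2 | hb3
      · -- b₁ = 2 : n < 2q, recurse with (q, 2q-n)
        have hb2' : (b₁:ℚ) = 2 := by exact_mod_cast hb2.symm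
        have hlt2 : (n:ℚ)/(q:ℚ) < 2 := by rw [← h1, hb2']; linarith
        have h2q : n < 2*q := by
          rw [div_lt_iff₀ hqQ] at hlt2
          exact_mod_cast hlt2
        -- hj (mc t) = q / (2q - n)
        have hjt_ne : hj (mc t) ≠ 0 := by linarith
        have hjt : hj (mc t) = (q:ℚ)/((2*q - n : ℤ):ℚ) := by
          have hi : (hj (mc t))⁻¹ = 2 - (n:ℚ)/(q:ℚ) := by rw [← h1, hb2']; ring
          rw [← inv_inv (hj (mc t)), hi]
          push_cast
          rw [inv_eq_iff_eq_inv, eq_comm, inv_div]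
          field_simp
        -- b'₁ ≥ 3
        have hdual_gt : (2:ℚ) < (n:ℚ)/((n:ℚ)-(q:ℚ)) := by
          rw [lt_div_iff₀ hnqQ]
          have : (n:ℚ) < 2*(q:ℚ) := by exact_mod_cast h2q
          linarith
        have hb'3 : 3 ≤ b'₁ := by
          have h3 : (2:ℚ) < (b'₁:ℚ) := by linarith [h2]
          have h4 : (2:ℤ) < b'₁ := by exact_mod_cast h3
          omega
        -- c' = (b'₁ - 1) :: t' represents q/(q - (2q-n))
        have hc'val : hj (mc ((b'₁ - 1) :: t')) = (q:ℚ)/((q:ℚ) - ((2*q - n : ℤ):ℚ)) := by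
          rw [mc_cons, hjAux_cons]
          push_cast
          have : ((q:ℚ)) - (2*(q:ℚ) - (n:ℚ)) = (n:ℚ) - q := by ring
          rw [this]
          have hgoal : (n:ℚ)/((n:ℚ)-(q:ℚ)) - 1 = (q:ℚ)/((n:ℚ)-(q:ℚ)) := by
            field_simp
            ring
          linarith [h2, hgoal]
        have hcop' : IsCoprime q (2*q - n) := by
          have h0 : IsCoprime q (n + q * (-2)) := hcop.symm.add_mul_left_right (-2)
          have h1' : IsCoprime q (-(n + q * (-2))) := h0.neg_right
          have he : -(n + q * (-2)) = 2*q - n := by ring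
          rwa [he] at h1'
        have ihres := ih q (2*q - n) (by push_cast at hN ⊢; omega) (by omega) (by omega)
          hcop' t ((b'₁ - 1) :: t') htne (by simp)
          hbt (by
            intro x hx
            simp only [List.mem_cons] at hx
            rcases hx with rfl | hx
            · omega
            · exact hbt' x hx)
          hjt hc'val
        simp only [List.length_cons, List.sum_cons] at ihres ⊢
        push_cast at ihres ⊢
        omega
      · -- b₁ ≥ 3 : n > 2q, recurse with (n - q, q)
        have hb3' : (3:ℚ) ≤ (b₁:ℚ) := by exact_mod_cast hb3
        have hgt2 : (2:ℚ) < (n:ℚ)/(q:ℚ) := by rw [← h1]; linarith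
        have h2q : 2*q < n := by
          rw [lt_div_iff₀ hqQ] at hgt2
          exact_mod_cast hgt2
        have hn2qQ : (0:ℚ) < (n:ℚ) - 2*(q:ℚ) := by
          have : (2*q:ℚ) < n := by exact_mod_cast h2q
          push_cast at this ⊢; linarith
        -- b~ = (b₁ - 1) :: t represents (n-q)/q
        have hbtval : hj (mc ((b₁ - 1) :: t)) = (((n - q:ℤ)):ℚ)/(q:ℚ) := by
          rw [mc_cons, hjAux_cons]
          push_cast
          have : ((n:ℚ)-q)/q = (n:ℚ)/q - 1 := by field_simp
          rw [this, ← h1]; ring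
        -- dual side: b'₁ = 2
        have hdual_lt : (n:ℚ)/((n:ℚ)-(q:ℚ)) < 2 := by
          rw [div_lt_iff₀ hnqQ]; linarith
        have hdual_gt : (1:ℚ) < (n:ℚ)/((n:ℚ)-(q:ℚ)) := by
          rw [lt_div_iff₀ hnqQ]; linarith
        have hb'2 : b'₁ = 2 := by
          have hlt3 : (b'₁:ℚ) < 3 := by linarith [h2]
          have : b'₁ < 3 := by exact_mod_cast hlt3
          omega
        have hb'2' : (b'₁:ℚ) = 2 := by exact_mod_cast hb'2
        have hi'pos : (0:ℚ) < (hj (mc t'))⁻¹ := by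
          have hx : (b'₁:ℚ) - (hj (mc t'))⁻¹ < 2 := by rw [h2]; exact hdual_lt
          rw [hb'2'] at hx; linarith
        have ht'ne : t' ≠ [] := by
          intro hh
          have : (hj (mc t'))⁻¹ = 0 := by rw [hh]; show (hj [])⁻¹ = 0; simp [hj]
          linarith
        have hjt'_ne : hj (mc t') ≠ 0 := by
          have := hj_gt_one t' ht'ne hbt'; linarith
        have hjt' : hj (mc t') = (((n - q:ℤ)):ℚ)/((((n - q:ℤ)):ℚ) - (q:ℚ)) := by
          have hi : (hj (mc t'))⁻¹ = 2 - (n:ℚ)/((n:ℚ)-q) := by rw [← h2, hb'2']; ring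
          rw [← inv_inv (hj (mc t')), hi]
          push_cast
          rw [inv_eq_iff_eq_inv, eq_comm, inv_div]
          field_simp
          ring
        have hcop' : IsCoprime (n - q) q := by
          have h0 : IsCoprime (n + q * (-1)) q := hcop.add_mul_left_left (-1)
          have he : n + q * (-1) = n - q := by ring
          rwa [he] at h0
        have ihres := ih (n - q) q (by push_cast at hN ⊢; omega) hq (by omega)
          hcop' ((b₁ - 1) :: t) t' (by simp) ht'ne
          (by
            intro x hx
            simp only [List.mem_cons] at hx
            rcases hx with rfl | hx
            · omega
            · exact hbt x hx)
          hbt' hbtval hjt'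
        simp only [List.length_cons, List.sum_cons] at ihres ⊢
        push_cast at ihres ⊢
        omega

/-- If `n > q > 0` are coprime with Hirzebruch–Jung expansions
`n/q = [[b_1, …, b_r]]` and `n/(n−q) = [[b'_1, …, b'_s]]` (all partial quotients `≥ 2`),
then `s = (Σ_{i=1}^r b_i) − 2r + 1`. -/
theorem hj_dual_length (n q : ℤ) (hq : 0 < q) (hn : q < n) (hcop : IsCoprime n q)
    (b b' : List ℤ) (hbne : b ≠ []) (hb'ne : b' ≠ [])
    (hb : ∀ x ∈ b, 2 ≤ x) (hb' : ∀ x ∈ b', 2 ≤ x)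
    (h1 : hj (b.map fun x => (x : ℚ)) = (n : ℚ) / (q : ℚ))
    (h2 : hj (b'.map fun x => (x : ℚ)) = (n : ℚ) / ((n : ℚ) - (q : ℚ))) :
    (b'.length : ℤ) = b.sum - 2 * b.length + 1 := by
  rw [hjAux_mapcast] at h1 h2
  exact hj_dual_aux n.toNat n q (by rw [Int.toNat_of_nonneg (by omega)]) hq hn hcop
    b b' hbne hb'ne hb hb' h1 h2
end

section
/- Let T be a triangulation of a convex polygon P and let [a,b] be an inner diagonal of T belonging to the quadrilateral with vertices a, c, b, d in T. Mutation (flip) at [a,b] replaces [a,b] by [c,d] and changes the quiddity as follows: the quiddity at a and at b each decrease by 1, the quiddity at c and at d each increase by 1, and the quiddity at every other vertex is unchanged. Moreover, flipping [c,d] in the new triangulation returns the original triangulation T. -/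
open scoped Classical

/-- Two diagonals `p, q` of a convex `m`-gon (each recorded as an ordered pair of
vertices, smaller first) cross iff their endpoints strictly interleave. -/
def Cross {m : ℕ} (p q : Fin m × Fin m) : Prop :=
  ((p.1 : ℕ) < (q.1 : ℕ) ∧ (q.1 : ℕ) < (p.2 : ℕ) ∧ (p.2 : ℕ) < (q.2 : ℕ)) ∨
  ((q.1 : ℕ) < (p.1 : ℕ) ∧ (p.1 : ℕ) < (q.2 : ℕ) ∧ (q.2 : ℕ) < (p.2 : ℕ))

/-- A triangulation of a convex `m`-gon (vertices `0, …, m−1` in cyclic order):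
a maximal set of pairwise non-crossing inner diagonals, each recorded as an
ordered pair of non-adjacent vertices. -/
structure Triangulation (m : ℕ) where
  diag : Finset (Fin m × Fin m)
  mem_lt : ∀ p ∈ diag, (p.1 : ℕ) + 1 < (p.2 : ℕ)
  not_boundary : ∀ p ∈ diag, ¬((p.1 : ℕ) = 0 ∧ (p.2 : ℕ) + 1 = m)
  noncross : ∀ p ∈ diag, ∀ q ∈ diag, ¬ Cross p q
  maximal : ∀ p : Fin m × Fin m, (p.1 : ℕ) + 1 < (p.2 : ℕ) →
    ¬((p.1 : ℕ) = 0 ∧ (p.2 : ℕ) + 1 = m) → p ∉ diag → ∃ q ∈ diag, Cross p q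

/-- `u` and `v` are consecutive vertices (a boundary side) of the `m`-gon. -/
def IsSide {m : ℕ} (u v : Fin m) : Prop :=
  ((u : ℕ) + 1) % m = (v : ℕ) ∨ ((v : ℕ) + 1) % m = (u : ℕ)

/-- The ordered pair (smaller vertex first) underlying an unordered pair. -/
def sp {m : ℕ} (u v : Fin m) : Fin m × Fin m :=
  if (u : ℕ) < (v : ℕ) then (u, v) else (v, u)

/-- `u` and `v` are joined by an edge of the triangulated polygon:
either a boundary side or a diagonal of the triangulation. -/
def IsEdge {m : ℕ} (T : Triangulation m) (u v : Fin m) : Prop :=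
  IsSide u v ∨ sp u v ∈ T.diag

/-- `u, v, w` span a triangle of the triangulation (for vertices in convex
position this means exactly that all three connecting edges are present). -/
def IsTri {m : ℕ} (T : Triangulation m) (u v w : Fin m) : Prop :=
  IsEdge T u v ∧ IsEdge T v w ∧ IsEdge T u w

/-- The triangles of the triangulation, as increasingly ordered triples. -/
noncomputable def triangles {m : ℕ} (T : Triangulation m) :
    Finset (Fin m × Fin m × Fin m) :=
  Finset.univ.filter fun t =>
    (t.1 : ℕ) < (t.2.1 : ℕ) ∧ (t.2.1 : ℕ) < (t.2.2 : ℕ) ∧ IsTri T t.1 t.2.1 t.2.2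

/-- The quiddity of a vertex: the number of triangles of the triangulation
incident to it. -/
noncomputable def quiddity {m : ℕ} (T : Triangulation m) (v : Fin m) : ℕ :=
  ((triangles T).filter fun t => v = t.1 ∨ v = t.2.1 ∨ v = t.2.2).card

section Foundation
variable {m : ℕ}

lemma cross_symm {p q : Fin m × Fin m} : Cross p q ↔ Cross q p := by
  unfold Cross; tauto


lemma cross_def {m : ℕ} {u v x y : Fin m} :
    Cross (u, v) (x, y) ↔
      (((u : ℕ) < x ∧ (x : ℕ) < v ∧ (v : ℕ) < y) ∨
       ((x : ℕ) < u ∧ (u : ℕ) < y ∧ (y : ℕ) < v)) := Iff.rfl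

lemma cross_defl {m : ℕ} {u v : Fin m} {q : Fin m × Fin m} :
    Cross (u, v) q ↔
      (((u : ℕ) < q.1 ∧ (q.1 : ℕ) < v ∧ (v : ℕ) < q.2) ∨
       ((q.1 : ℕ) < u ∧ (u : ℕ) < q.2 ∧ (q.2 : ℕ) < v)) := Iff.rfl


lemma cross_defr {m : ℕ} {u v : Fin m} {q : Fin m × Fin m} :
    Cross q (u, v) ↔
      (((q.1 : ℕ) < u ∧ (u : ℕ) < q.2 ∧ (q.2 : ℕ) < v) ∨
       ((u : ℕ) < q.1 ∧ (q.1 : ℕ) < v ∧ (v : ℕ) < q.2)) := Iff.rfl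

lemma sp_lt {u v : Fin m} (h : (u : ℕ) < v) : sp u v = (u, v) := by
  simp [sp, h]

lemma sp_gt {u v : Fin m} (h : (v : ℕ) < u) : sp u v = (v, u) := by
  rw [sp, if_neg (by omega)]

lemma isSide_elim {u v : Fin m} (hlt : (u : ℕ) < v) (h : IsSide u v) :
    (u : ℕ) + 1 = v ∨ ((u : ℕ) = 0 ∧ (v : ℕ) + 1 = m) := by
  have hv := v.isLt
  have hu := u.isLt
  rcases h with h | h
  · rcases Nat.lt_or_ge ((u : ℕ) + 1) m with h' | h'
    · rw [Nat.mod_eq_of_lt h'] at h; omega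
    · have he : (u : ℕ) + 1 = m := by omega
      rw [he, Nat.mod_self] at h; omega
  · rcases Nat.lt_or_ge ((v : ℕ) + 1) m with h' | h'
    · rw [Nat.mod_eq_of_lt h'] at h; omega
    · have he : (v : ℕ) + 1 = m := by omega
      rw [he, Nat.mod_self] at h; omega

lemma isEdge_symm {T : Triangulation m} {u v : Fin m} (h : IsEdge T u v) :
    IsEdge T v u := by
  rcases h with h | h
  · exact Or.inl h.symm
  · right
    rcases Nat.lt_trichotomy (u : ℕ) (v : ℕ) with h' | h' | h'
    · rwa [sp_gt h', ← sp_lt h']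
    · have : u = v := Fin.ext h'
      subst this; exact h
    · rwa [sp_lt h', ← sp_gt h']

lemma edge_resolve {T : Triangulation m} {u v : Fin m} (hlt : (u : ℕ) < v)
    (h : IsEdge T u v) : IsSide u v ∨ (u, v) ∈ T.diag := by
  rcases h with h | h
  · exact Or.inl h
  · right; rwa [sp_lt hlt] at h

lemma no_cross_side {u v : Fin m} (hlt : (u : ℕ) < v) (hs : IsSide u v)
    (q : Fin m × Fin m) : ¬ Cross (u, v) q := by
  have h1 := isSide_elim hlt hs
  have h2 := q.2.isLt
  intro hc
  have hc' : ((u : ℕ) < q.1 ∧ (q.1 : ℕ) < v ∧ (v : ℕ) < q.2) ∨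
      ((q.1 : ℕ) < u ∧ (u : ℕ) < q.2 ∧ (q.2 : ℕ) < v) := hc
  omega

lemma no_cross_edge_diag {T : Triangulation m} {u v : Fin m} {q : Fin m × Fin m}
    (hlt : (u : ℕ) < v) (h : IsEdge T u v) (hq : q ∈ T.diag) : ¬ Cross (u, v) q := by
  rcases edge_resolve hlt h with hs | hm
  · exact no_cross_side hlt hs q
  · exact T.noncross _ hm q hq

lemma no_cross_edge_edge {T : Triangulation m} {u v x y : Fin m}
    (h1 : (u : ℕ) < v) (h2 : (x : ℕ) < y) (e1 : IsEdge T u v) (e2 : IsEdge T x y) :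
    ¬ Cross (u, v) (x, y) := by
  rcases edge_resolve h2 e2 with hs | hm
  · intro hc
    exact no_cross_side h2 hs (u, v) (cross_symm.mp hc)
  · exact no_cross_edge_diag h1 e1 hm

lemma third_unique_aux (S : Triangulation m) {u v x y : Fin m} (huv : (u : ℕ) < v)
    (hux : IsEdge S u x) (hxv : IsEdge S x v) (huy : IsEdge S u y) (hyv : IsEdge S y v)
    (hxy : (x : ℕ) < (y : ℕ))
    (hside : (((u : ℕ) < x ∧ (x : ℕ) < v) ∧ ((u : ℕ) < y ∧ (y : ℕ) < v)) ∨
      (((x : ℕ) < u ∨ (v : ℕ) < x) ∧ ((y : ℕ) < u ∨ (v : ℕ) < y))) : False := by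
  rcases hside with ⟨⟨h1, h2⟩, ⟨h3, h4⟩⟩ | ⟨hx, hy⟩
  · exact no_cross_edge_edge (by omega : (u : ℕ) < y) (by omega : (x : ℕ) < v)
      huy hxv (cross_def.mpr (by omega))
  · rcases hx with hx | hx <;> rcases hy with hy | hy
    · exact no_cross_edge_edge (by omega : (x : ℕ) < u) (by omega : (y : ℕ) < v)
        (isEdge_symm hux) hyv (cross_def.mpr (by omega))
    · exact no_cross_edge_edge (by omega : (x : ℕ) < v) (by omega : (u : ℕ) < y)
        hxv huy (cross_def.mpr (by omega))
    · omega
    · exact no_cross_edge_edge (by omega : (u : ℕ) < x) (by omega : (v : ℕ) < y)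
        hux (isEdge_symm hyv) (cross_def.mpr (by omega))

lemma third_unique (S : Triangulation m) {u v x y : Fin m} (huv : (u : ℕ) < v)
    (hux : IsEdge S u x) (hxv : IsEdge S x v) (huy : IsEdge S u y) (hyv : IsEdge S y v)
    (hxy : (x : ℕ) ≠ (y : ℕ))
    (hside : (((u : ℕ) < x ∧ (x : ℕ) < v) ∧ ((u : ℕ) < y ∧ (y : ℕ) < v)) ∨
      (((x : ℕ) < u ∨ (v : ℕ) < x) ∧ ((y : ℕ) < u ∨ (v : ℕ) < y))) : False := by
  rcases Nat.lt_or_ge (x : ℕ) (y : ℕ) with h | h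
  · exact third_unique_aux S huv hux hxv huy hyv h hside
  · exact third_unique_aux S huv huy hyv hux hxv (by omega) (by tauto)

lemma mem_triangles {T : Triangulation m} {t : Fin m × Fin m × Fin m} :
    t ∈ triangles T ↔
      (t.1 : ℕ) < (t.2.1 : ℕ) ∧ (t.2.1 : ℕ) < (t.2.2 : ℕ) ∧ IsTri T t.1 t.2.1 t.2.2 := by
  simp [triangles]

lemma no_self_edge {T : Triangulation m} {x : Fin m} (hm : 2 ≤ m)
    (h : IsEdge T x x) : False := by
  have hx := x.isLt
  rcases h with h | h
  · rcases h with h | h <;>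
    · rcases Nat.lt_or_ge ((x : ℕ) + 1) m with h' | h'
      · rw [Nat.mod_eq_of_lt h'] at h; omega
      · have he : (x : ℕ) + 1 = m := by omega
        rw [he, Nat.mod_self] at h; omega
  · have h2 := T.mem_lt _ ((by rw [sp, if_neg (by omega)] at h; exact h))
    simp at h2

end Foundation

section Counting
variable {m : ℕ}

lemma quiddity_swap (T T' : Triangulation m) (s1 s2 n1 n2 : Fin m × Fin m × Fin m)
    (hs1 : s1 ∈ triangles T) (hs2 : s2 ∈ triangles T) (h12 : s1 ≠ s2)
    (hn1 : n1 ∉ triangles T) (hn2 : n2 ∉ triangles T) (hn12 : n1 ≠ n2)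
    (hT' : triangles T' = insert n1 (insert n2 (((triangles T).erase s1).erase s2)))
    (v : Fin m) :
    quiddity T' v +
      ((if v = s1.1 ∨ v = s1.2.1 ∨ v = s1.2.2 then 1 else 0) +
       (if v = s2.1 ∨ v = s2.2.1 ∨ v = s2.2.2 then 1 else 0)) =
    quiddity T v +
      ((if v = n1.1 ∨ v = n1.2.1 ∨ v = n1.2.2 then 1 else 0) +
       (if v = n2.1 ∨ v = n2.2.1 ∨ v = n2.2.2 then 1 else 0)) := by
  classical
  set f : Fin m × Fin m × Fin m → ℕ :=
    fun t => if v = t.1 ∨ v = t.2.1 ∨ v = t.2.2 then 1 else 0 with hf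
  set S := triangles T with hS
  have hn2' : n2 ∉ (S.erase s1).erase s2 :=
    fun h => hn2 (Finset.mem_of_mem_erase (Finset.mem_of_mem_erase h))
  have hn1' : n1 ∉ insert n2 ((S.erase s1).erase s2) := by
    intro h
    rcases Finset.mem_insert.mp h with h | h
    · exact hn12 h
    · exact hn1 (Finset.mem_of_mem_erase (Finset.mem_of_mem_erase h))
  have hs2' : s2 ∈ S.erase s1 := Finset.mem_erase.mpr ⟨fun h => h12 h.symm, hs2⟩
  have e1 : quiddity T' v = f n1 + (f n2 + ∑ t ∈ (S.erase s1).erase s2, f t) := by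
    rw [quiddity, Finset.card_filter, hT', Finset.sum_insert hn1', Finset.sum_insert hn2']
  have e2 : ∑ t ∈ (S.erase s1).erase s2, f t + f s2 = ∑ t ∈ S.erase s1, f t :=
    Finset.sum_erase_add _ f hs2'
  have e3 : ∑ t ∈ S.erase s1, f t + f s1 = ∑ t ∈ S, f t :=
    Finset.sum_erase_add _ f hs1
  have e4 : quiddity T v = ∑ t ∈ S, f t := by
    rw [quiddity, Finset.card_filter]
  have hfs1 : f s1 = if v = s1.1 ∨ v = s1.2.1 ∨ v = s1.2.2 then 1 else 0 := rfl
  have hfs2 : f s2 = if v = s2.1 ∨ v = s2.2.1 ∨ v = s2.2.2 then 1 else 0 := rfl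
  have hfn1 : f n1 = if v = n1.1 ∨ v = n1.2.1 ∨ v = n1.2.2 then 1 else 0 := rfl
  have hfn2 : f n2 = if v = n2.1 ∨ v = n2.2.1 ∨ v = n2.2.2 then 1 else 0 := rfl
  rw [← hfs1, ← hfs2, ← hfn1, ← hfn2]
  omega

end Counting
section Core
variable {m : ℕ}

lemma pair_ne₁ {x y x' y' : Fin m} (h : (x : ℕ) ≠ x') : (x, y) ≠ (x', y') := by
  intro hc; rw [Prod.mk.injEq] at hc; exact h (congrArg Fin.val hc.1)

lemma pair_ne₂ {x y x' y' : Fin m} (h : (y : ℕ) ≠ y') : (x, y) ≠ (x', y') := by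
  intro hc; rw [Prod.mk.injEq] at hc; exact h (congrArg Fin.val hc.2)

lemma tri_ne₁ {x y z x' y' z' : Fin m} (h : (x : ℕ) ≠ x') :
    ((x, y, z) : Fin m × Fin m × Fin m) ≠ (x', y', z') := by
  intro hc; rw [Prod.mk.injEq, Prod.mk.injEq] at hc
  exact h (congrArg Fin.val hc.1)

lemma tri_ne₂ {x y z x' y' z' : Fin m} (h : (y : ℕ) ≠ y') :
    ((x, y, z) : Fin m × Fin m × Fin m) ≠ (x', y', z') := by
  intro hc; rw [Prod.mk.injEq, Prod.mk.injEq] at hc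
  exact h (congrArg Fin.val hc.2.1)

set_option maxHeartbeats 3200000 in
lemma flip_core (T : Triangulation m) (a b e f : Fin m)
    (hab : (a, b) ∈ T.diag)
    (eae : IsEdge T a e) (eeb : IsEdge T e b)
    (eaf : IsEdge T a f) (ebf : IsEdge T b f)
    (hae : (a : ℕ) < e) (heb : (e : ℕ) < b) (hout : (f : ℕ) < a ∨ (b : ℕ) < f) :
    ∃ T' : Triangulation m,
      T'.diag = insert (sp e f) (T.diag.erase (a, b)) ∧
      quiddity T' a + 1 = quiddity T a ∧
      quiddity T' b + 1 = quiddity T b ∧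
      quiddity T' e = quiddity T e + 1 ∧
      quiddity T' f = quiddity T f + 1 ∧
      (∀ v : Fin m, v ≠ a → v ≠ b → v ≠ e → v ≠ f →
        quiddity T' v = quiddity T v) ∧
      insert (a, b) (T'.diag.erase (sp e f)) = T.diag := by
  have habl : (a : ℕ) + 1 < b := T.mem_lt _ hab
  have habn : ¬((a : ℕ) = 0 ∧ (b : ℕ) + 1 = m) := T.not_boundary _ hab
  have hbm := b.isLt
  have hfm := f.isLt
  have eab : IsEdge T a b := Or.inr (by rw [sp_lt (by omega)]; exact hab)
  rcases hout with hfa | hbf2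
  -- ===================== BRANCH 1 : f < a =====================
  · have hg_not : ((f, e) : Fin m × Fin m) ∉ T.diag := fun h =>
      T.noncross _ h _ hab (cross_def.mpr (by omega))
    have hfe_notT : ¬ IsEdge T f e := by
      intro h
      rcases edge_resolve (by omega) h with hs | hm'
      · rcases isSide_elim (by omega) hs with h' | h' <;> omega
      · exact hg_not hm'
    have hNC : ∀ q ∈ T.diag.erase (a, b), ¬ Cross (f, e) q := by
      intro q hq hc
      obtain ⟨hqne, hqd⟩ := Finset.mem_erase.mp hq
      have hql := T.mem_lt q hqd
      have hq2 := q.2.isLt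
      have n1 := no_cross_edge_diag (show (f : ℕ) < a by omega) (isEdge_symm eaf) hqd
      have n2 := no_cross_edge_diag (show (f : ℕ) < b by omega) (isEdge_symm ebf) hqd
      have n3 := no_cross_edge_diag (show (a : ℕ) < e by omega) eae hqd
      have n4 := no_cross_edge_diag (show (e : ℕ) < b by omega) eeb hqd
      have n5 := no_cross_edge_diag (show (a : ℕ) < b by omega) eab hqd
      rw [cross_defl] at n1 n2 n3 n4 n5 hc
      have hqnab : ¬((q.1 : ℕ) = a ∧ (q.2 : ℕ) = b) := fun h =>
        hqne (Prod.ext (Fin.ext h.1) (Fin.ext h.2))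
      omega
    have pf_ml : ∀ p ∈ insert ((f, e) : Fin m × Fin m) (T.diag.erase (a, b)),
        (p.1 : ℕ) + 1 < (p.2 : ℕ) := by
      intro p hp
      rcases Finset.mem_insert.mp hp with rfl | hp'
      · exact (by omega : (f : ℕ) + 1 < (e : ℕ))
      · exact T.mem_lt _ (Finset.mem_of_mem_erase hp')
    have pf_nb : ∀ p ∈ insert ((f, e) : Fin m × Fin m) (T.diag.erase (a, b)),
        ¬((p.1 : ℕ) = 0 ∧ (p.2 : ℕ) + 1 = m) := by
      intro p hp
      rcases Finset.mem_insert.mp hp with rfl | hp'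
      · exact (by omega : ¬((f : ℕ) = 0 ∧ (e : ℕ) + 1 = m))
      · exact T.not_boundary _ (Finset.mem_of_mem_erase hp')
    have pf_nc : ∀ p ∈ insert ((f, e) : Fin m × Fin m) (T.diag.erase (a, b)),
        ∀ q ∈ insert ((f, e) : Fin m × Fin m) (T.diag.erase (a, b)), ¬ Cross p q := by
      intro p hp q hq
      rcases Finset.mem_insert.mp hp with rfl | hp' <;>
        rcases Finset.mem_insert.mp hq with rfl | hq'
      · intro hc; rw [cross_def] at hc; omega
      · exact hNC q hq'
      · exact fun hc => hNC p hp' (cross_symm.mp hc)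
      · exact T.noncross _ (Finset.mem_of_mem_erase hp') _ (Finset.mem_of_mem_erase hq')
    have pf_max : ∀ p : Fin m × Fin m, (p.1 : ℕ) + 1 < (p.2 : ℕ) →
        ¬((p.1 : ℕ) = 0 ∧ (p.2 : ℕ) + 1 = m) →
        p ∉ insert ((f, e) : Fin m × Fin m) (T.diag.erase (a, b)) →
        ∃ q ∈ insert ((f, e) : Fin m × Fin m) (T.diag.erase (a, b)), Cross p q := by
      intro p hl hnb hpD
      by_cases hex : ∃ q ∈ T.diag.erase (a, b), Cross p q
      · obtain ⟨q, hq, hc⟩ := hex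
        exact ⟨q, Finset.mem_insert_of_mem hq, hc⟩
      · push_neg at hex
        by_cases hpab : p = (a, b)
        · subst hpab
          exact ⟨(f, e), Finset.mem_insert_self _ _, cross_def.mpr (by omega)⟩
        · have hpT : p ∉ T.diag := fun h =>
            hpD (Finset.mem_insert_of_mem (Finset.mem_erase.mpr ⟨hpab, h⟩))
          obtain ⟨q, hq, hc⟩ := T.maximal p hl hnb hpT
          by_cases hqab : q = (a, b)
          · subst hqab
            exfalso
            have mk_nc : ∀ u v : Fin m, (u : ℕ) < v → IsEdge T u v →
                ((u, v) : Fin m × Fin m) ≠ (a, b) → ¬ Cross p (u, v) := by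
              intro u v hlt he hne hcc
              rcases edge_resolve hlt he with hs | hm'
              · exact no_cross_side hlt hs p (cross_symm.mp hcc)
              · exact hex (u, v) (Finset.mem_erase.mpr ⟨hne, hm'⟩) hcc
            have c1 := mk_nc f a (by omega) (isEdge_symm eaf) (pair_ne₂ (by omega))
            have c2 := mk_nc f b (by omega) (isEdge_symm ebf) (pair_ne₁ (by omega))
            have c3 := mk_nc a e (by omega) eae (pair_ne₂ (by omega))
            have c4 := mk_nc e b (by omega) eeb (pair_ne₁ (by omega))
            have hp2 := p.2.isLt
            rw [cross_defr] at c1 c2 c3 c4 hc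
            have hpe : (p.1 : ℕ) = f ∧ (p.2 : ℕ) = e := by omega
            exact hpD (by
              rw [show p = ((f, e) : Fin m × Fin m) from
                Prod.ext (Fin.ext hpe.1) (Fin.ext hpe.2)]
              exact Finset.mem_insert_self _ _)
          · exact absurd hc (hex q (Finset.mem_erase.mpr ⟨hqab, hq⟩))
    set T' : Triangulation m := ⟨_, pf_ml, pf_nb, pf_nc, pf_max⟩ with hT'def
    have hD : T'.diag = insert ((f, e) : Fin m × Fin m) (T.diag.erase (a, b)) := rfl
    have hspef : sp e f = ((f, e) : Fin m × Fin m) := sp_gt (by omega)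
    refine ⟨T', by rw [hspef], ?_⟩
    have nn : ∀ x y : Fin m, (x : ℕ) ≠ (y : ℕ) → x ≠ y :=
      fun x y h hc => h (congrArg Fin.val hc)
    have edge_fwd : ∀ {x y : Fin m}, IsEdge T x y → sp x y ≠ (a, b) → IsEdge T' x y := by
      intro x y h hne
      rcases h with h | h
      · exact Or.inl h
      · exact Or.inr (by rw [hD]; exact Finset.mem_insert_of_mem (Finset.mem_erase.mpr ⟨hne, h⟩))
    have edge_g : IsEdge T' f e := Or.inr (by
      rw [sp_lt (show (f : ℕ) < e by omega), hD]; exact Finset.mem_insert_self _ _)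
    have edge_bwd : ∀ {x y : Fin m}, IsEdge T' x y → IsEdge T x y ∨ sp x y = (f, e) := by
      intro x y h
      rcases h with h | h
      · exact Or.inl (Or.inl h)
      · rw [hD] at h
        rcases Finset.mem_insert.mp h with h | h
        · exact Or.inr h
        · exact Or.inl (Or.inr (Finset.mem_of_mem_erase h))
    have hab_gone : ¬ IsEdge T' a b := by
      intro h
      rcases h with h | h
      · rcases isSide_elim (by omega) h with h' | h'
        · omega
        · exact habn h'
      · rw [sp_lt (by omega : (a : ℕ) < b), hD] at h
        rcases Finset.mem_insert.mp h with h' | h'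
        · rw [Prod.mk.injEq] at h'
          exact absurd (congrArg Fin.val h'.1) (by omega)
        · exact (Finset.mem_erase.mp h').1 rfl
    have edge_fa' : IsEdge T' f a := edge_fwd (isEdge_symm eaf)
      (by rw [sp_lt hfa]; exact pair_ne₂ (by omega))
    have edge_ae' : IsEdge T' a e := edge_fwd eae
      (by rw [sp_lt hae]; exact pair_ne₂ (by omega))
    have edge_fb' : IsEdge T' f b := edge_fwd (isEdge_symm ebf)
      (by rw [sp_lt (show (f : ℕ) < b by omega)]; exact pair_ne₁ (by omega))
    have edge_eb' : IsEdge T' e b := edge_fwd eeb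
      (by rw [sp_lt heb]; exact pair_ne₁ (by omega))
    have third_T : ∀ x : Fin m, IsEdge T a x → IsEdge T x b → (x : ℕ) ≠ a → (x : ℕ) ≠ b →
        (x : ℕ) = e ∨ (x : ℕ) = f := by
      intro x h1 h2 hxa hxb
      rcases Nat.lt_trichotomy (x : ℕ) a with h | h | h
      · right; by_contra hne
        exact third_unique T (show (a : ℕ) < b by omega) h1 h2 eaf (isEdge_symm ebf)
          hne (Or.inr ⟨Or.inl h, Or.inl hfa⟩)
      · exact absurd h hxa
      · rcases Nat.lt_trichotomy (x : ℕ) b with h' | h' | h'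
        · left; by_contra hne
          exact third_unique T (show (a : ℕ) < b by omega) h1 h2 eae eeb hne
            (Or.inl ⟨⟨h, h'⟩, ⟨hae, heb⟩⟩)
        · exact absurd h' hxb
        · right; by_contra hne
          exact third_unique T (by omega) h1 h2 eaf (isEdge_symm ebf) hne
            (Or.inr ⟨Or.inr h', Or.inl hfa⟩)
    have third_T' : ∀ x : Fin m, IsEdge T' f x → IsEdge T' x e → (x : ℕ) ≠ f → (x : ℕ) ≠ e →
        (x : ℕ) = a ∨ (x : ℕ) = b := by
      intro x h1 h2 hxf hxe
      rcases Nat.lt_trichotomy (x : ℕ) f with h | h | h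
      · right; by_contra hne
        exact third_unique T' (show (f : ℕ) < e by omega) h1 h2 edge_fb'
          (isEdge_symm edge_eb') hne (Or.inr ⟨Or.inl h, Or.inr (by omega)⟩)
      · exact absurd h hxf
      · rcases Nat.lt_trichotomy (x : ℕ) e with h' | h' | h'
        · left; by_contra hne
          exact third_unique T' (show (f : ℕ) < e by omega) h1 h2 edge_fa' edge_ae' hne
            (Or.inl ⟨⟨h, h'⟩, ⟨hfa, by omega⟩⟩)
        · exact absurd h' hxe
        · right; by_contra hne
          exact third_unique T' (by omega) h1 h2 edge_fb' (isEdge_symm edge_eb') hne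
            (Or.inr ⟨Or.inr h', Or.inr (by omega)⟩)
    have hs1T : ((a, e, b) : Fin m × Fin m × Fin m) ∈ triangles T :=
      mem_triangles.mpr ⟨hae, heb, eae, eeb, eab⟩
    have hs2T : ((f, a, b) : Fin m × Fin m × Fin m) ∈ triangles T :=
      mem_triangles.mpr ⟨hfa, (by omega : (a : ℕ) < (b : ℕ)), isEdge_symm eaf, eab, isEdge_symm ebf⟩
    have hn1F : ((f, a, e) : Fin m × Fin m × Fin m) ∉ triangles T := by
      intro h; exact hfe_notT (mem_triangles.mp h).2.2.2.2
    have hn2F : ((f, e, b) : Fin m × Fin m × Fin m) ∉ triangles T := by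
      intro h; exact hfe_notT (mem_triangles.mp h).2.2.1
    have htri : triangles T' = insert ((f, a, e) : Fin m × Fin m × Fin m)
        (insert ((f, e, b) : Fin m × Fin m × Fin m)
          (((triangles T).erase (a, e, b)).erase (f, a, b))) := by
      ext t
      obtain ⟨u, v, w⟩ := t
      simp only [mem_triangles, IsTri, Finset.mem_insert, Finset.mem_erase, Prod.mk.injEq]
      constructor
      · rintro ⟨huv, hvw, h1, h2, h3⟩
        rcases edge_bwd h1 with e1 | g1
        · rcases edge_bwd h2 with e2 | g2
          · rcases edge_bwd h3 with e3 | g3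
            · refine Or.inr (Or.inr ⟨?_, ?_, huv, hvw, e1, e2, e3⟩)
              · rintro ⟨rfl, rfl, rfl⟩; exact hab_gone h2
              · rintro ⟨rfl, rfl, rfl⟩; exact hab_gone h3
            · rw [sp_lt (show (u : ℕ) < w by omega), Prod.mk.injEq] at g3
              obtain ⟨rfl, rfl⟩ := g3
              rcases third_T' v h1 h2 (by omega) (by omega) with hva | hvb
              · exact Or.inl ⟨rfl, Fin.ext hva, rfl⟩
              · omega
          · rw [sp_lt (show (v : ℕ) < w by omega), Prod.mk.injEq] at g2
            obtain ⟨rfl, rfl⟩ := g2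
            rcases third_T' u (isEdge_symm h1) h3 (by omega) (by omega) with h' | h' <;> omega
        · rw [sp_lt (show (u : ℕ) < v by omega), Prod.mk.injEq] at g1
          obtain ⟨rfl, rfl⟩ := g1
          rcases third_T' w h3 (isEdge_symm h2) (by omega) (by omega) with hwa | hwb
          · omega
          · exact Or.inr (Or.inl ⟨rfl, rfl, Fin.ext hwb⟩)
      · rintro (⟨rfl, rfl, rfl⟩ | ⟨rfl, rfl, rfl⟩ | ⟨hne2, hne1, huv, hvw, h1, h2, h3⟩)
        · exact ⟨hfa, hae, edge_fa', edge_ae', edge_g⟩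
        · exact ⟨by omega, by omega, edge_g, edge_eb', edge_fb'⟩
        · refine ⟨huv, hvw, ?_, ?_, ?_⟩
          · by_cases hx : (u : ℕ) = a ∧ (v : ℕ) = b
            · exfalso
              have hu : u = a := Fin.ext hx.1
              have hv : v = b := Fin.ext hx.2
              subst hu; subst hv
              rcases third_T w h3 (isEdge_symm h2) (by omega) (by omega) with h' | h' <;> omega
            · exact edge_fwd h1 (by
                rw [sp_lt huv]
                intro hc; rw [Prod.mk.injEq] at hc
                exact hx ⟨congrArg Fin.val hc.1, congrArg Fin.val hc.2⟩)
          · by_cases hx : (v : ℕ) = a ∧ (w : ℕ) = b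
            · exfalso
              have hv : v = a := Fin.ext hx.1
              have hw : w = b := Fin.ext hx.2
              subst hv; subst hw
              rcases third_T u (isEdge_symm h1) h3 (by omega) (by omega) with h' | h'
              · omega
              · exact hne2 (by rw [Fin.ext h'])
            · exact edge_fwd h2 (by
                rw [sp_lt hvw]
                intro hc; rw [Prod.mk.injEq] at hc
                exact hx ⟨congrArg Fin.val hc.1, congrArg Fin.val hc.2⟩)
          · by_cases hx : (u : ℕ) = a ∧ (w : ℕ) = b
            · exfalso
              have hu : u = a := Fin.ext hx.1
              have hw : w = b := Fin.ext hx.2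
              subst hu; subst hw
              rcases third_T v h1 h2 (by omega) (by omega) with h' | h'
              · exact hne1 (by rw [Fin.ext h'])
              · omega
            · exact edge_fwd h3 (by
                rw [sp_lt (show (u : ℕ) < w by omega)]
                intro hc; rw [Prod.mk.injEq] at hc
                exact hx ⟨congrArg Fin.val hc.1, congrArg Fin.val hc.2⟩)
    have hq := fun v => quiddity_swap T T' (a, e, b) (f, a, b) (f, a, e) (f, e, b)
      hs1T hs2T (tri_ne₁ (by omega)) hn1F hn2F (tri_ne₂ (by omega)) htri v
    have ne_ae : a ≠ e := nn _ _ (by omega)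
    have ne_ab : a ≠ b := nn _ _ (by omega)
    have ne_af : a ≠ f := nn _ _ (by omega)
    have ne_bf : b ≠ f := nn _ _ (by omega)
    have ne_ba : b ≠ a := nn _ _ (by omega)
    have ne_be : b ≠ e := nn _ _ (by omega)
    have ne_ea : e ≠ a := nn _ _ (by omega)
    have ne_eb : e ≠ b := nn _ _ (by omega)
    have ne_ef : e ≠ f := nn _ _ (by omega)
    have ne_fa : f ≠ a := nn _ _ (by omega)
    have ne_fb : f ≠ b := nn _ _ (by omega)
    have ne_fe : f ≠ e := nn _ _ (by omega)
    have hqa : quiddity T' a + (1 + 1) = quiddity T a + (1 + 0) := by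
      have h := hq a
      dsimp only at h
      simpa [ne_ae, ne_ab, ne_af] using h
    have hqb : quiddity T' b + (1 + 1) = quiddity T b + (0 + 1) := by
      have h := hq b
      dsimp only at h
      simpa [ne_ba, ne_be, ne_bf] using h
    have hqe : quiddity T' e + (1 + 0) = quiddity T e + (1 + 1) := by
      have h := hq e
      dsimp only at h
      simpa [ne_ea, ne_eb, ne_ef] using h
    have hqf : quiddity T' f + (0 + 1) = quiddity T f + (1 + 1) := by
      have h := hq f
      dsimp only at h
      simpa [ne_fa, ne_fb, ne_fe] using h
    refine ⟨by omega, by omega, by omega, by omega, ?_, ?_⟩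
    · intro v hva hvb hve hvf
      have h := hq v
      dsimp only at h
      simpa [hva, hvb, hve, hvf] using h
    · rw [hspef, hD, Finset.erase_insert (fun h => hg_not (Finset.mem_of_mem_erase h)),
        Finset.insert_erase hab]
  · have hg_not : ((e, f) : Fin m × Fin m) ∉ T.diag := fun h =>
      T.noncross _ h _ hab (cross_def.mpr (by omega))
    have hef_notT : ¬ IsEdge T e f := by
      intro h
      rcases edge_resolve (by omega) h with hs | hm'
      · rcases isSide_elim (by omega) hs with h' | h' <;> omega
      · exact hg_not hm'
    have hNC : ∀ q ∈ T.diag.erase (a, b), ¬ Cross (e, f) q := by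
      intro q hq hc
      obtain ⟨hqne, hqd⟩ := Finset.mem_erase.mp hq
      have hql := T.mem_lt q hqd
      have hq2 := q.2.isLt
      have n1 := no_cross_edge_diag (show (a : ℕ) < e by omega) eae hqd
      have n2 := no_cross_edge_diag (show (e : ℕ) < b by omega) eeb hqd
      have n3 := no_cross_edge_diag (show (a : ℕ) < f by omega) eaf hqd
      have n4 := no_cross_edge_diag (show (b : ℕ) < f by omega) ebf hqd
      have n5 := no_cross_edge_diag (show (a : ℕ) < b by omega) eab hqd
      rw [cross_defl] at n1 n2 n3 n4 n5 hc
      have hqnab : ¬((q.1 : ℕ) = a ∧ (q.2 : ℕ) = b) := fun h =>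
        hqne (Prod.ext (Fin.ext h.1) (Fin.ext h.2))
      omega
    have pf_ml : ∀ p ∈ insert ((e, f) : Fin m × Fin m) (T.diag.erase (a, b)),
        (p.1 : ℕ) + 1 < (p.2 : ℕ) := by
      intro p hp
      rcases Finset.mem_insert.mp hp with rfl | hp'
      · exact (by omega : (e : ℕ) + 1 < (f : ℕ))
      · exact T.mem_lt _ (Finset.mem_of_mem_erase hp')
    have pf_nb : ∀ p ∈ insert ((e, f) : Fin m × Fin m) (T.diag.erase (a, b)),
        ¬((p.1 : ℕ) = 0 ∧ (p.2 : ℕ) + 1 = m) := by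
      intro p hp
      rcases Finset.mem_insert.mp hp with rfl | hp'
      · exact (by omega : ¬((e : ℕ) = 0 ∧ (f : ℕ) + 1 = m))
      · exact T.not_boundary _ (Finset.mem_of_mem_erase hp')
    have pf_nc : ∀ p ∈ insert ((e, f) : Fin m × Fin m) (T.diag.erase (a, b)),
        ∀ q ∈ insert ((e, f) : Fin m × Fin m) (T.diag.erase (a, b)), ¬ Cross p q := by
      intro p hp q hq
      rcases Finset.mem_insert.mp hp with rfl | hp' <;>
        rcases Finset.mem_insert.mp hq with rfl | hq'
      · intro hc; rw [cross_def] at hc; omega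
      · exact hNC q hq'
      · exact fun hc => hNC p hp' (cross_symm.mp hc)
      · exact T.noncross _ (Finset.mem_of_mem_erase hp') _ (Finset.mem_of_mem_erase hq')
    have pf_max : ∀ p : Fin m × Fin m, (p.1 : ℕ) + 1 < (p.2 : ℕ) →
        ¬((p.1 : ℕ) = 0 ∧ (p.2 : ℕ) + 1 = m) →
        p ∉ insert ((e, f) : Fin m × Fin m) (T.diag.erase (a, b)) →
        ∃ q ∈ insert ((e, f) : Fin m × Fin m) (T.diag.erase (a, b)), Cross p q := by
      intro p hl hnb hpD
      by_cases hex : ∃ q ∈ T.diag.erase (a, b), Cross p q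
      · obtain ⟨q, hq, hc⟩ := hex
        exact ⟨q, Finset.mem_insert_of_mem hq, hc⟩
      · push_neg at hex
        by_cases hpab : p = (a, b)
        · subst hpab
          exact ⟨(e, f), Finset.mem_insert_self _ _, cross_def.mpr (by omega)⟩
        · have hpT : p ∉ T.diag := fun h =>
            hpD (Finset.mem_insert_of_mem (Finset.mem_erase.mpr ⟨hpab, h⟩))
          obtain ⟨q, hq, hc⟩ := T.maximal p hl hnb hpT
          by_cases hqab : q = (a, b)
          · subst hqab
            exfalso
            have mk_nc : ∀ u v : Fin m, (u : ℕ) < v → IsEdge T u v →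
                ((u, v) : Fin m × Fin m) ≠ (a, b) → ¬ Cross p (u, v) := by
              intro u v hlt he hne hcc
              rcases edge_resolve hlt he with hs | hm'
              · exact no_cross_side hlt hs p (cross_symm.mp hcc)
              · exact hex (u, v) (Finset.mem_erase.mpr ⟨hne, hm'⟩) hcc
            have c1 := mk_nc a e (by omega) eae (pair_ne₂ (by omega))
            have c2 := mk_nc e b (by omega) eeb (pair_ne₁ (by omega))
            have c3 := mk_nc a f (by omega) eaf (pair_ne₂ (by omega))
            have c4 := mk_nc b f (by omega) ebf (pair_ne₁ (by omega))
            have hp2 := p.2.isLt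
            rw [cross_defr] at c1 c2 c3 c4 hc
            have hpe : (p.1 : ℕ) = e ∧ (p.2 : ℕ) = f := by omega
            exact hpD (by
              rw [show p = ((e, f) : Fin m × Fin m) from
                Prod.ext (Fin.ext hpe.1) (Fin.ext hpe.2)]
              exact Finset.mem_insert_self _ _)
          · exact absurd hc (hex q (Finset.mem_erase.mpr ⟨hqab, hq⟩))
    set T' : Triangulation m := ⟨_, pf_ml, pf_nb, pf_nc, pf_max⟩ with hT'def
    have hD : T'.diag = insert ((e, f) : Fin m × Fin m) (T.diag.erase (a, b)) := rfl
    have hspef : sp e f = ((e, f) : Fin m × Fin m) := sp_lt (by omega)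
    refine ⟨T', by rw [hspef], ?_⟩
    have nn : ∀ x y : Fin m, (x : ℕ) ≠ (y : ℕ) → x ≠ y :=
      fun x y h hc => h (congrArg Fin.val hc)
    have edge_fwd : ∀ {x y : Fin m}, IsEdge T x y → sp x y ≠ (a, b) → IsEdge T' x y := by
      intro x y h hne
      rcases h with h | h
      · exact Or.inl h
      · exact Or.inr (by rw [hD]; exact Finset.mem_insert_of_mem (Finset.mem_erase.mpr ⟨hne, h⟩))
    have edge_g : IsEdge T' e f := Or.inr (by
      rw [sp_lt (show (e : ℕ) < f by omega), hD]; exact Finset.mem_insert_self _ _)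
    have edge_bwd : ∀ {x y : Fin m}, IsEdge T' x y → IsEdge T x y ∨ sp x y = (e, f) := by
      intro x y h
      rcases h with h | h
      · exact Or.inl (Or.inl h)
      · rw [hD] at h
        rcases Finset.mem_insert.mp h with h | h
        · exact Or.inr h
        · exact Or.inl (Or.inr (Finset.mem_of_mem_erase h))
    have hab_gone : ¬ IsEdge T' a b := by
      intro h
      rcases h with h | h
      · rcases isSide_elim (by omega) h with h' | h'
        · omega
        · exact habn h'
      · rw [sp_lt (by omega : (a : ℕ) < b), hD] at h
        rcases Finset.mem_insert.mp h with h' | h'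
        · rw [Prod.mk.injEq] at h'
          exact absurd (congrArg Fin.val h'.1) (by omega)
        · exact (Finset.mem_erase.mp h').1 rfl
    have edge_ae' : IsEdge T' a e := edge_fwd eae
      (by rw [sp_lt hae]; exact pair_ne₂ (by omega))
    have edge_eb' : IsEdge T' e b := edge_fwd eeb
      (by rw [sp_lt heb]; exact pair_ne₁ (by omega))
    have edge_af' : IsEdge T' a f := edge_fwd eaf
      (by rw [sp_lt (show (a : ℕ) < f by omega)]; exact pair_ne₂ (by omega))
    have edge_bf' : IsEdge T' b f := edge_fwd ebf
      (by rw [sp_lt (show (b : ℕ) < f by omega)]; exact pair_ne₁ (by omega))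
    have third_T : ∀ x : Fin m, IsEdge T a x → IsEdge T x b → (x : ℕ) ≠ a → (x : ℕ) ≠ b →
        (x : ℕ) = e ∨ (x : ℕ) = f := by
      intro x h1 h2 hxa hxb
      rcases Nat.lt_trichotomy (x : ℕ) a with h | h | h
      · right; by_contra hne
        exact third_unique T (show (a : ℕ) < b by omega) h1 h2 eaf (isEdge_symm ebf)
          hne (Or.inr ⟨Or.inl h, Or.inr hbf2⟩)
      · exact absurd h hxa
      · rcases Nat.lt_trichotomy (x : ℕ) b with h' | h' | h'
        · left; by_contra hne
          exact third_unique T (show (a : ℕ) < b by omega) h1 h2 eae eeb hne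
            (Or.inl ⟨⟨h, h'⟩, ⟨hae, heb⟩⟩)
        · exact absurd h' hxb
        · right; by_contra hne
          exact third_unique T (by omega) h1 h2 eaf (isEdge_symm ebf) hne
            (Or.inr ⟨Or.inr h', Or.inr hbf2⟩)
    have third_T' : ∀ x : Fin m, IsEdge T' e x → IsEdge T' x f → (x : ℕ) ≠ e → (x : ℕ) ≠ f →
        (x : ℕ) = a ∨ (x : ℕ) = b := by
      intro x h1 h2 hxe hxf
      rcases Nat.lt_trichotomy (x : ℕ) e with h | h | h
      · left; by_contra hne
        exact third_unique T' (show (e : ℕ) < f by omega) h1 h2 (isEdge_symm edge_ae')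
          edge_af' hne (Or.inr ⟨Or.inl h, Or.inl hae⟩)
      · exact absurd h hxe
      · rcases Nat.lt_trichotomy (x : ℕ) f with h' | h' | h'
        · right; by_contra hne
          exact third_unique T' (show (e : ℕ) < f by omega) h1 h2 edge_eb' edge_bf' hne
            (Or.inl ⟨⟨h, h'⟩, ⟨heb, hbf2⟩⟩)
        · exact absurd h' hxf
        · left; by_contra hne
          exact third_unique T' (by omega) h1 h2 (isEdge_symm edge_ae') edge_af' hne
            (Or.inr ⟨Or.inr h', Or.inl hae⟩)
    have hs1T : ((a, e, b) : Fin m × Fin m × Fin m) ∈ triangles T :=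
      mem_triangles.mpr ⟨hae, heb, eae, eeb, eab⟩
    have hs2T : ((a, b, f) : Fin m × Fin m × Fin m) ∈ triangles T :=
      mem_triangles.mpr ⟨(by omega : (a : ℕ) < (b : ℕ)), hbf2, eab, ebf, eaf⟩
    have hn1F : ((a, e, f) : Fin m × Fin m × Fin m) ∉ triangles T := by
      intro h; exact hef_notT (mem_triangles.mp h).2.2.2.1
    have hn2F : ((e, b, f) : Fin m × Fin m × Fin m) ∉ triangles T := by
      intro h; exact hef_notT (mem_triangles.mp h).2.2.2.2
    have htri : triangles T' = insert ((a, e, f) : Fin m × Fin m × Fin m)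
        (insert ((e, b, f) : Fin m × Fin m × Fin m)
          (((triangles T).erase (a, e, b)).erase (a, b, f))) := by
      ext t
      obtain ⟨u, v, w⟩ := t
      simp only [mem_triangles, IsTri, Finset.mem_insert, Finset.mem_erase, Prod.mk.injEq]
      constructor
      · rintro ⟨huv, hvw, h1, h2, h3⟩
        rcases edge_bwd h1 with e1 | g1
        · rcases edge_bwd h2 with e2 | g2
          · rcases edge_bwd h3 with e3 | g3
            · refine Or.inr (Or.inr ⟨?_, ?_, huv, hvw, e1, e2, e3⟩)
              · rintro ⟨rfl, rfl, rfl⟩; exact hab_gone h1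
              · rintro ⟨rfl, rfl, rfl⟩; exact hab_gone h3
            · rw [sp_lt (show (u : ℕ) < w by omega), Prod.mk.injEq] at g3
              obtain ⟨rfl, rfl⟩ := g3
              rcases third_T' v h1 h2 (by omega) (by omega) with hva | hvb
              · omega
              · exact Or.inr (Or.inl ⟨rfl, Fin.ext hvb, rfl⟩)
          · rw [sp_lt (show (v : ℕ) < w by omega), Prod.mk.injEq] at g2
            obtain ⟨rfl, rfl⟩ := g2
            rcases third_T' u (isEdge_symm h1) h3 (by omega) (by omega) with h' | h'
            · exact Or.inl ⟨Fin.ext h', rfl, rfl⟩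
            · omega
        · rw [sp_lt (show (u : ℕ) < v by omega), Prod.mk.injEq] at g1
          obtain ⟨rfl, rfl⟩ := g1
          rcases third_T' w h3 (isEdge_symm h2) (by omega) (by omega) with hwa | hwb <;> omega
      · rintro (⟨rfl, rfl, rfl⟩ | ⟨rfl, rfl, rfl⟩ | ⟨hne2, hne1, huv, hvw, h1, h2, h3⟩)
        · exact ⟨hae, by omega, edge_ae', edge_g, edge_af'⟩
        · exact ⟨heb, hbf2, edge_eb', edge_bf', edge_g⟩
        · refine ⟨huv, hvw, ?_, ?_, ?_⟩
          · by_cases hx : (u : ℕ) = a ∧ (v : ℕ) = b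
            · exfalso
              have hu : u = a := Fin.ext hx.1
              have hv : v = b := Fin.ext hx.2
              subst hu; subst hv
              rcases third_T w h3 (isEdge_symm h2) (by omega) (by omega) with h' | h'
              · omega
              · exact hne2 (by rw [Fin.ext h'])
            · exact edge_fwd h1 (by
                rw [sp_lt huv]
                intro hc; rw [Prod.mk.injEq] at hc
                exact hx ⟨congrArg Fin.val hc.1, congrArg Fin.val hc.2⟩)
          · by_cases hx : (v : ℕ) = a ∧ (w : ℕ) = b
            · exfalso
              have hv : v = a := Fin.ext hx.1
              have hw : w = b := Fin.ext hx.2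
              subst hv; subst hw
              rcases third_T u (isEdge_symm h1) h3 (by omega) (by omega) with h' | h' <;> omega
            · exact edge_fwd h2 (by
                rw [sp_lt hvw]
                intro hc; rw [Prod.mk.injEq] at hc
                exact hx ⟨congrArg Fin.val hc.1, congrArg Fin.val hc.2⟩)
          · by_cases hx : (u : ℕ) = a ∧ (w : ℕ) = b
            · exfalso
              have hu : u = a := Fin.ext hx.1
              have hw : w = b := Fin.ext hx.2
              subst hu; subst hw
              rcases third_T v h1 h2 (by omega) (by omega) with h' | h'
              · exact hne1 (by rw [Fin.ext h'])
              · omega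
            · exact edge_fwd h3 (by
                rw [sp_lt (show (u : ℕ) < w by omega)]
                intro hc; rw [Prod.mk.injEq] at hc
                exact hx ⟨congrArg Fin.val hc.1, congrArg Fin.val hc.2⟩)
    have hq := fun v => quiddity_swap T T' (a, e, b) (a, b, f) (a, e, f) (e, b, f)
      hs1T hs2T (tri_ne₂ (by omega)) hn1F hn2F (tri_ne₁ (by omega)) htri v
    have ne_ae : a ≠ e := nn _ _ (by omega)
    have ne_ab : a ≠ b := nn _ _ (by omega)
    have ne_af : a ≠ f := nn _ _ (by omega)
    have ne_bf : b ≠ f := nn _ _ (by omega)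
    have ne_ba : b ≠ a := nn _ _ (by omega)
    have ne_be : b ≠ e := nn _ _ (by omega)
    have ne_ea : e ≠ a := nn _ _ (by omega)
    have ne_eb : e ≠ b := nn _ _ (by omega)
    have ne_ef : e ≠ f := nn _ _ (by omega)
    have ne_fa : f ≠ a := nn _ _ (by omega)
    have ne_fb : f ≠ b := nn _ _ (by omega)
    have ne_fe : f ≠ e := nn _ _ (by omega)
    have hqa : quiddity T' a + (1 + 1) = quiddity T a + (1 + 0) := by
      have h := hq a
      dsimp only at h
      simpa [ne_ae, ne_ab, ne_af] using h
    have hqb : quiddity T' b + (1 + 1) = quiddity T b + (0 + 1) := by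
      have h := hq b
      dsimp only at h
      simpa [ne_ba, ne_be, ne_bf] using h
    have hqe : quiddity T' e + (1 + 0) = quiddity T e + (1 + 1) := by
      have h := hq e
      dsimp only at h
      simpa [ne_ea, ne_eb, ne_ef] using h
    have hqf : quiddity T' f + (0 + 1) = quiddity T f + (1 + 1) := by
      have h := hq f
      dsimp only at h
      simpa [ne_fa, ne_fb, ne_fe] using h
    refine ⟨by omega, by omega, by omega, by omega, ?_, ?_⟩
    · intro v hva hvb hve hvf
      have h := hq v
      dsimp only at h
      simpa [hva, hvb, hve, hvf] using h
    · rw [hspef, hD, Finset.erase_insert (fun h => hg_not (Finset.mem_of_mem_erase h)),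
        Finset.insert_erase hab]

end Core

/-- Mutation (flip) of an inner diagonal `[a,b]` of a triangulation `T`, where
`(a,c,b)` and `(a,b,d)` are the two triangles of `T` adjacent to `[a,b]` (so
`a, c, b, d` is the quadrilateral of `T` with diagonal `[a,b]`): replacing
`[a,b]` by `[c,d]` yields a triangulation in which the quiddities of `a` and
`b` drop by `1`, the quiddities of `c` and `d` increase by `1`, and all other
quiddities are unchanged; moreover flipping `[c,d]` back returns `T`. -/
theorem flip_diagonal (m : ℕ) (T : Triangulation m) (a b c d : Fin m)
    (hab : (a, b) ∈ T.diag)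
    (hc : IsTri T a c b) (hd : IsTri T a b d) (hcd : c ≠ d) :
    ∃ T' : Triangulation m,
      T'.diag = insert (sp c d) (T.diag.erase (a, b)) ∧
      quiddity T' a + 1 = quiddity T a ∧
      quiddity T' b + 1 = quiddity T b ∧
      quiddity T' c = quiddity T c + 1 ∧
      quiddity T' d = quiddity T d + 1 ∧
      (∀ v : Fin m, v ≠ a → v ≠ b → v ≠ c → v ≠ d →
        quiddity T' v = quiddity T v) ∧
      insert (a, b) (T'.diag.erase (sp c d)) = T.diag := by
  have habl : (a : ℕ) + 1 < b := T.mem_lt _ hab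
  have hbm := b.isLt
  obtain ⟨eac, ecb, eab⟩ := hc
  obtain ⟨eab', ebd, ead⟩ := hd
  have hm2 : 2 ≤ m := by omega
  have hca : (c : ℕ) ≠ a := fun h =>
    no_self_edge hm2 (by rw [show c = a from Fin.ext h] at eac; exact eac)
  have hcb : (c : ℕ) ≠ b := fun h =>
    no_self_edge hm2 (by rw [show c = b from Fin.ext h] at ecb; exact ecb)
  have hda : (d : ℕ) ≠ a := fun h =>
    no_self_edge hm2 (by rw [show d = a from Fin.ext h] at ead; exact ead)
  have hdb : (d : ℕ) ≠ b := fun h =>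
    no_self_edge hm2 (by rw [show d = b from Fin.ext h] at ebd; exact ebd)
  have hcd' : (c : ℕ) ≠ d := fun h => hcd (Fin.ext h)
  have hnot_in : ¬(((a : ℕ) < c ∧ (c : ℕ) < b) ∧ ((a : ℕ) < d ∧ (d : ℕ) < b)) :=
    fun ⟨h1, h2⟩ => third_unique T (show (a : ℕ) < b by omega) eac ecb ead
      (isEdge_symm ebd) hcd' (Or.inl ⟨h1, h2⟩)
  have hnot_out : ¬(((c : ℕ) < a ∨ (b : ℕ) < c) ∧ ((d : ℕ) < a ∨ (b : ℕ) < d)) :=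
    fun ⟨h1, h2⟩ => third_unique T (show (a : ℕ) < b by omega) eac ecb ead
      (isEdge_symm ebd) hcd' (Or.inr ⟨h1, h2⟩)
  have hccase : ((a : ℕ) < c ∧ (c : ℕ) < b) ∨ ((c : ℕ) < a ∨ (b : ℕ) < c) := by omega
  have hdcase : ((a : ℕ) < d ∧ (d : ℕ) < b) ∨ ((d : ℕ) < a ∨ (b : ℕ) < d) := by omega
  rcases hccase with hcin | hcout
  · have hdout : (d : ℕ) < a ∨ (b : ℕ) < d := by
      rcases hdcase with hdin | hdout
      · exact absurd ⟨hcin, hdin⟩ hnot_in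
      · exact hdout
    exact flip_core T a b c d hab eac ecb ead ebd hcin.1 hcin.2 hdout
  · have hdin : (a : ℕ) < d ∧ (d : ℕ) < b := by
      rcases hdcase with hdin | hdout
      · exact hdin
      · exact absurd ⟨hcout, hdout⟩ hnot_out
    obtain ⟨T', h1, h2, h3, h4, h5, h6, h7⟩ :=
      flip_core T a b d c hab ead (isEdge_symm ebd) eac (isEdge_symm ecb)
        hdin.1 hdin.2 hcout
    have hsp : sp d c = sp c d := by
      rcases Nat.lt_trichotomy (c : ℕ) (d : ℕ) with h | h | h
      · rw [sp_gt h, sp_lt h]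
      · exact absurd h hcd'
      · rw [sp_lt h, sp_gt h]
    exact ⟨T', by rw [← hsp]; exact h1, h2, h3, h5, h4,
      fun v hva hvb hvc hvd => h6 v hva hvb hvd hvc, by rw [← hsp]; exact h7⟩
end

section
/- Let F be a Conway–Coxeter frieze with entries p_{i,j} (Plücker labeling, 1 ≤ i < j ≤ m, with p_{i,i}=0, p_{i,i+1}=1) coming from a triangulation T of an m-gon, and suppose the diagonal [i,j] belongs to T (so p_{i,j} = 1) with 1 ≤ i < j ≤ m−1 and j − i ≥ 2. Then the sequence (a_1, ..., a_{i−1}, p_{i−1,j}, p_{i,j+1}, a_{j+1}, ..., a_m), where (a_1, ..., a_m) is the quiddity of F, is the quiddity sequence of a Conway–Coxeter frieze of width m + i − j − 2. -/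
/-- A (tame) frieze pattern of width `w`: entries `m i j` for `i ≤ j ≤ i + w + 3`,
with the usual boundary conditions and the unimodular diamond rule. In the
Plücker labeling `p_{i,j}` of the paper, `p i j = m i j` for `i < j ≤ i + w + 3`,
the quiddity is `a k = m (k−1) (k+1)`. -/
structure Frieze (w : ℕ) where
  m : ℤ → ℤ → ℤ
  diag_zero : ∀ i : ℤ, m i i = 0
  diag_one : ∀ i : ℤ, m i (i + 1) = 1
  top_one : ∀ i : ℤ, m i (i + (w : ℤ) + 2) = 1
  top_zero : ∀ i : ℤ, m i (i + (w : ℤ) + 3) = 0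
  rule : ∀ i j : ℤ, i + 1 ≤ j → j ≤ i + (w : ℤ) + 2 →
    m i j * m (i + 1) (j + 1) - m (i + 1) j * m i (j + 1) = 1

namespace CCFAux

variable {w : ℕ} (F : Frieze w)

/-- Row recurrence in the second index. -/
lemma rec2nd (hp : ∀ a b : ℤ, a + 1 ≤ b → b ≤ a + (w:ℤ) + 2 → 0 < F.m a b) :
    ∀ k : ℕ, ∀ a b : ℤ, b = a + k → b ≤ a + (w:ℤ) + 1 →
      F.m a (b + 2) = F.m b (b + 2) * F.m a (b + 1) - F.m a b := by
  intro k
  induction k with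
  | zero =>
      intro a b hb _
      obtain rfl : b = a := by omega
      rw [F.diag_zero, F.diag_one]; ring
  | succ k ih =>
      intro a b hb hble
      have hab : a + 1 ≤ b := by omega
      have IH := ih (a+1) b (by omega) (by omega)
      have R1 := F.rule a b hab (by omega)
      have R2 := F.rule a (b+1) (by omega) (by omega)
      rw [show b + 1 + 1 = b + 2 by ring] at R2
      have hne : F.m (a+1) (b+1) ≠ 0 :=
        ne_of_gt (hp (a+1) (b+1) (by omega) (by omega))
      have key : F.m (a+1) (b+1) * (F.m a b + F.m a (b+2))
          = F.m (a+1) (b+1) * (F.m b (b+2) * F.m a (b+1)) := by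
        have h2 : F.m (a+1) (b+1) * (F.m a b + F.m a (b+2))
            = F.m a (b+1) * (F.m (a+1) b + F.m (a+1) (b+2)) := by
          linear_combination R1 - R2
        rw [h2, IH]; ring
      have := mul_left_cancel₀ hne key
      linarith

/-- Column recurrence in the first index. -/
lemma rec1st (hp : ∀ a b : ℤ, a + 1 ≤ b → b ≤ a + (w:ℤ) + 2 → 0 < F.m a b) :
    ∀ k : ℕ, ∀ b c : ℤ, c = b + 2 + k → c ≤ b + (w:ℤ) + 3 →
      F.m b c = F.m b (b + 2) * F.m (b + 1) c - F.m (b + 2) c := by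
  intro k
  induction k with
  | zero =>
      intro b c hc _
      obtain rfl : c = b + 2 := by omega
      have h := F.diag_one (b+1)
      rw [show b + 1 + 1 = b + 2 by ring] at h
      rw [F.diag_zero, h]; ring
  | succ k ih =>
      intro b c hc hcle
      obtain rfl : c = b + 2 + (k:ℤ) + 1 := by omega
      have IH := ih b (b + 2 + (k:ℤ)) (by push_cast; ring) (by omega)
      have R1 := F.rule b (b + 2 + (k:ℤ)) (by omega) (by omega)
      have R2 := F.rule (b+1) (b + 2 + (k:ℤ)) (by omega) (by omega)
      rw [show b + 1 + 1 = b + 2 by ring] at R2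
      have hne : F.m (b+1) (b + 2 + (k:ℤ)) ≠ 0 :=
        ne_of_gt (hp (b+1) (b + 2 + (k:ℤ)) (by omega) (by omega))
      have key : F.m (b+1) (b + 2 + (k:ℤ)) * (F.m b (b + 2 + (k:ℤ) + 1) + F.m (b+2) (b + 2 + (k:ℤ) + 1))
          = F.m (b+1) (b + 2 + (k:ℤ)) * (F.m b (b + 2) * F.m (b+1) (b + 2 + (k:ℤ) + 1)) := by
        have h2 : F.m (b+1) (b + 2 + (k:ℤ) + 1) * (F.m b (b + 2 + (k:ℤ)) + F.m (b+2) (b + 2 + (k:ℤ)))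
            = F.m (b+1) (b + 2 + (k:ℤ)) * (F.m b (b + 2 + (k:ℤ) + 1) + F.m (b+2) (b + 2 + (k:ℤ) + 1)) := by
          linear_combination R1 - R2
        rw [← h2, IH]; ring
      have := mul_left_cancel₀ hne key
      linarith

/-- Glide symmetry. -/
lemma glide (hp : ∀ a b : ℤ, a + 1 ≤ b → b ≤ a + (w:ℤ) + 2 → 0 < F.m a b) :
    ∀ k : ℕ, ∀ a b : ℤ, b = a + k → b ≤ a + (w:ℤ) + 3 →
      F.m a b = F.m b (a + (w:ℤ) + 3) := by
  intro k
  induction k using Nat.strong_induction_on with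
  | _ k ih =>
  rcases k with _ | _ | k
  · intro a b hb _
    obtain rfl : b = a := by omega
    rw [F.diag_zero, F.top_zero]
  · intro a b hb _
    obtain rfl : b = a + 1 := by omega
    have h := F.top_one (a+1)
    rw [show a + 1 + (w:ℤ) + 2 = a + (w:ℤ) + 3 by ring] at h
    rw [F.diag_one, h]
  · intro a b hb hble
    obtain rfl : b = a + (k:ℤ) + 2 := by omega
    have IH1 := ih (k+1) (by omega) a (a + (k:ℤ) + 1) (by push_cast; ring) (by omega)
    have IH0 := ih k (by omega) a (a + (k:ℤ)) rfl (by omega)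
    have e1 := rec2nd F hp k a (a + (k:ℤ)) rfl (by omega)
    have e2 := rec1st F hp (w + 1 - k) (a + (k:ℤ)) (a + (w:ℤ) + 3) (by push_cast; omega) (by omega)
    rw [show a + (k:ℤ) + 1 = a + ((k:ℤ) + 1) by ring] at e2
    rw [IH1, IH0] at e1
    rw [show a + ((k:ℤ) + 1) = a + (k:ℤ) + 1 by ring] at e2
    linarith [e1, e2]

/-- One-period translation invariance. -/
lemma per (hp : ∀ a b : ℤ, a + 1 ≤ b → b ≤ a + (w:ℤ) + 2 → 0 < F.m a b)
    (a b : ℤ) (h1 : a ≤ b) (h2 : b ≤ a + (w:ℤ) + 3) :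
    F.m (a + (w:ℤ) + 3) (b + (w:ℤ) + 3) = F.m a b := by
  have g1 := glide F hp (b - a).toNat a b (by omega) h2
  have g2 := glide F hp (a + (w:ℤ) + 3 - b).toNat b (a + (w:ℤ) + 3) (by omega) (by omega)
  rw [g1, g2]

/-- Full translation invariance. -/
lemma per_t (hpos : ∀ a b : ℤ, a + 1 ≤ b → b ≤ a + (w:ℤ) + 2 → 0 < F.m a b)
    (a b : ℤ) (h1 : a ≤ b) (h2 : b ≤ a + (w:ℤ) + 3) :
    ∀ t : ℤ, F.m (a + t * ((w:ℤ) + 3)) (b + t * ((w:ℤ) + 3)) = F.m a b := by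
  intro t
  induction t using Int.induction_on with
  | zero => simpa using rfl
  | succ t ihp =>
      have P := per F hpos (a + (t:ℤ) * ((w:ℤ) + 3)) (b + (t:ℤ) * ((w:ℤ) + 3))
        (by linarith) (by linarith)
      rw [show a + ((t:ℤ) + 1) * ((w:ℤ) + 3) = a + (t:ℤ) * ((w:ℤ) + 3) + (w:ℤ) + 3 by ring,
          show b + ((t:ℤ) + 1) * ((w:ℤ) + 3) = b + (t:ℤ) * ((w:ℤ) + 3) + (w:ℤ) + 3 by ring]
      exact P.trans ihp
  | pred t ihn =>
      have P := (per F hpos (a + (-(t:ℤ) - 1) * ((w:ℤ) + 3)) (b + (-(t:ℤ) - 1) * ((w:ℤ) + 3))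
        (by linarith) (by linarith)).symm
      rw [show a + (-(t:ℤ) - 1) * ((w:ℤ) + 3) + (w:ℤ) + 3 = a + (-(t:ℤ)) * ((w:ℤ) + 3) by ring,
          show b + (-(t:ℤ) - 1) * ((w:ℤ) + 3) + (w:ℤ) + 3 = b + (-(t:ℤ)) * ((w:ℤ) + 3) by ring] at P
      exact P.trans ihn

/-- Generalized determinant identity (Ptolemy with one pair adjacent). -/
lemma det2 (hpos : ∀ a b : ℤ, a + 1 ≤ b → b ≤ a + (w:ℤ) + 2 → 0 < F.m a b) :
    ∀ k : ℕ, ∀ A B c : ℤ, B = A + k → B ≤ c → c + 1 ≤ A + (w:ℤ) + 3 →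
      F.m A c * F.m B (c+1) - F.m B c * F.m A (c+1) = F.m A B := by
  intro k
  induction k using Nat.strong_induction_on with
  | _ k ih =>
  rcases k with _ | _ | k
  · intro A B c hB hBc hc
    obtain rfl : B = A := by omega
    rw [F.diag_zero]; ring
  · intro A B c hB hBc hc
    obtain rfl : B = A + 1 := by omega
    rw [F.diag_one]
    exact F.rule A c (by omega) (by omega)
  · intro A B c hB hBc hc
    obtain rfl : B = A + (k:ℤ) + 2 := by omega
    have h1 := ih (k+1) (by omega) A (A + (k:ℤ) + 1) c (by push_cast; ring) (by omega) hc
    have h0 := ih k (by omega) A (A + (k:ℤ)) c rfl (by omega) hc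
    have s1 := rec1st F hpos (c - A - (k:ℤ) - 2).toNat (A + (k:ℤ)) c (by omega) (by omega)
    have s2 := rec1st F hpos (c + 1 - A - (k:ℤ) - 2).toNat (A + (k:ℤ)) (c+1) (by omega) (by omega)
    have r3 := rec2nd F hpos k A (A + (k:ℤ)) rfl (by omega)
    linear_combination F.m A c * s2 - F.m A (c+1) * s1 - r3
      + F.m (A + (k:ℤ)) (A + (k:ℤ) + 2) * h1 - h0
/-- Periodic vertex relabeling map. -/
def phi (I d P x : ℤ) : ℤ := x - d * ((I - x) / P)

lemma phi_add (I d P : ℤ) (hP : P ≠ 0) (x : ℤ) :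
    phi I d P (x + P) = phi I d P x + (P + d) := by
  unfold phi
  rw [show I - (x + P) = (I - x) + (-1) * P by ring, Int.add_mul_ediv_right _ _ hP]
  ring

lemma phi_formula (I d P : ℤ) (hP : 0 < P) (x t : ℤ)
    (h1 : I + t * P < x) (h2 : x ≤ I + (t + 1) * P) :
    phi I d P x = x + (t + 1) * d := by
  unfold phi
  rw [show I - x = (I + (t + 1) * P - x) + (-(t + 1)) * P by ring,
      Int.add_mul_ediv_right _ _ (by omega : P ≠ 0),
      Int.ediv_eq_zero_of_lt (by linarith) (by linarith)]
  ring

lemma phi_succ (I d P : ℤ) (hP : 0 < P) (x : ℤ) :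
    phi I d P (x + 1) = phi I d P x + 1 ∨
    ∃ t : ℤ, phi I d P x = I + t * (P + d) ∧ phi I d P (x + 1) = I + t * (P + d) + 1 + d := by
  set t : ℤ := (x - I) / P with ht
  have hdm := Int.mul_ediv_add_emod (x - I) P
  have hr0 := Int.emod_nonneg (x - I) (by omega : P ≠ 0)
  have hrP := Int.emod_lt_of_pos (x - I) hP
  have h1 : I + t * P ≤ x := by linarith
  have h2 : x < I + (t + 1) * P := by linarith
  rcases eq_or_lt_of_le h1 with he | hlt
  · right
    refine ⟨t, ?_, ?_⟩
    · rw [phi_formula I d P hP x (t - 1) (by linarith) (by linarith)]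
      rw [← he]; ring
    · rw [phi_formula I d P hP (x + 1) t (by linarith) (by linarith)]
      rw [← he]; ring
  · left
    rw [phi_formula I d P hP x t hlt (by linarith),
        phi_formula I d P hP (x + 1) t (by linarith) (by linarith)]
    ring

lemma phi_le (I d P : ℤ) (hP : 0 < P) (hd : 0 ≤ d) :
    ∀ k : ℕ, ∀ x : ℤ, phi I d P x + k ≤ phi I d P (x + k) := by
  intro k
  induction k with
  | zero => intro x; simp
  | succ k ih =>
      intro x
      have step : phi I d P x + 1 ≤ phi I d P (x + 1) := by
        rcases phi_succ I d P hP x with h | ⟨t, h1, h2⟩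
        · rw [h]
        · rw [h1, h2]; linarith
      have h := ih (x + 1)
      rw [show x + ((k:ℕ) + 1 : ℕ) = x + 1 + (k:ℤ) by push_cast; ring]
      push_cast
      linarith

lemma phi_le' (I d P : ℤ) (hP : 0 < P) (hd : 0 ≤ d) (x y : ℤ) (h : x ≤ y) :
    phi I d P x + (y - x) ≤ phi I d P y := by
  have h2 := phi_le I d P hP hd (y - x).toNat x
  have h3 : (((y - x).toNat : ℕ) : ℤ) = y - x := by omega
  rw [h3] at h2
  rw [show x + (y - x) = y by ring] at h2
  exact h2
theorem main_aux (w w' : ℕ) (M I J : ℤ)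
    (hw : (w:ℤ) = M - 3) (hw' : (w':ℤ) = M + I - J - 2)
    (hI : 1 ≤ I) (hIJ : I + 2 ≤ J) (hJM : J ≤ M - 1)
    (F : Frieze w)
    (hpos : ∀ a b : ℤ, a + 2 ≤ b → b ≤ a + M - 2 → 0 < F.m a b)
    (hdiag : F.m I J = 1) :
    ∃ F' : Frieze w',
      (∀ a b : ℤ, a + 2 ≤ b → b ≤ a + M + I - J - 1 → 0 < F'.m a b) ∧
      (∀ x y : ℤ, 0 ≤ x → x ≤ M + I - J + 2 → 0 ≤ y → y ≤ M + I - J + 2 →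
        F'.m x y = F.m (if x ≤ I then x else x + (J - I - 1))
          (if y ≤ I then y else y + (J - I - 1))) := by
  set P : ℤ := M + I - J + 1 with hPdef
  set d : ℤ := J - I - 1 with hddef
  have hP : 0 < P := by omega
  have hd : 0 < d := by omega
  have hPd : P + d = M := by omega
  have hM : 3 ≤ M := by omega
  have hp1 : ∀ a b : ℤ, a + 1 ≤ b → b ≤ a + (w:ℤ) + 2 → 0 < F.m a b := by
    intro a b h1 h2
    rcases eq_or_lt_of_le h1 with h | h
    · rw [← h, F.diag_one]; norm_num
    · rcases eq_or_lt_of_le h2 with h' | h'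
      · rw [h', F.top_one]; norm_num
      · exact hpos a b (by omega) (by omega)
  have per1 : ∀ t : ℤ, F.m (I + t * M) (J + t * M) = 1 := by
    intro t
    have h := per_t F hp1 I J (by omega) (by omega) t
    rw [show (w:ℤ) + 3 = M by omega] at h
    rw [h, hdiag]
  have gl : ∀ x y : ℤ, x ≤ y → y ≤ x + M → F.m x y = F.m y (x + M) := by
    intro x y h1 h2
    have h := glide F hp1 (y - x).toNat x y (by omega) (by omega)
    rw [show x + (w:ℤ) + 3 = x + M by omega] at h
    exact h
  have det : ∀ A B c : ℤ, A ≤ B → B ≤ c → c + 1 ≤ A + M →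
      F.m A c * F.m B (c+1) - F.m B c * F.m A (c+1) = F.m A B := by
    intro A B c h1 h2 h3
    exact det2 F hp1 (B - A).toNat A B c (by omega) h2 (by omega)
  have step : ∀ x : ℤ, phi I d P (x+1) = phi I d P x + 1 ∨
      ∃ t : ℤ, phi I d P x = I + t * M ∧ phi I d P (x+1) = J + t * M := by
    intro x
    rcases phi_succ I d P hP x with h | ⟨t, h1, h2⟩
    · exact Or.inl h
    · right
      refine ⟨t, ?_, ?_⟩
      · rw [h1, hPd]
      · rw [h2, hPd]; linear_combination hddef
  have mono : ∀ x y : ℤ, x ≤ y → phi I d P x + (y - x) ≤ phi I d P y :=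
    fun x y h => phi_le' I d P hP (le_of_lt hd) x y h
  refine ⟨⟨fun a b => F.m (phi I d P a) (phi I d P b), ?_, ?_, ?_, ?_, ?_⟩, ?_, ?_⟩
  · -- diag_zero
    intro a
    exact F.diag_zero _
  · -- diag_one
    intro a
    show F.m (phi I d P a) (phi I d P (a+1)) = 1
    rcases step a with h | ⟨t, h1, h2⟩
    · rw [h, F.diag_one]
    · rw [h1, h2]; exact per1 t
  · -- top_one
    intro a
    show F.m (phi I d P a) (phi I d P (a + (w':ℤ) + 2)) = 1
    rw [show a + (w':ℤ) + 2 = (a - 1) + P by omega,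
        phi_add I d P (by omega) (a-1), hPd]
    have hs := step (a - 1)
    rw [show a - 1 + 1 = a by ring] at hs
    rcases hs with h | ⟨t, h1, h2⟩
    · rw [h, show phi I d P (a-1) + M = (phi I d P (a-1) + 1) + (w:ℤ) + 2 by rw [hw]; ring]
      exact F.top_one _
    · rw [h1, h2]
      have g := gl (I + t * M) (J + t * M) (by linarith) (by linarith)
      rw [per1 t] at g
      exact g.symm
  · -- top_zero
    intro a
    show F.m (phi I d P a) (phi I d P (a + (w':ℤ) + 3)) = 0
    rw [show a + (w':ℤ) + 3 = a + P by omega, phi_add I d P (by omega) a, hPd,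
        show phi I d P a + M = phi I d P a + (w:ℤ) + 3 by rw [hw]; ring]
    exact F.top_zero _
  · -- rule
    intro a b h1 h2
    show F.m (phi I d P a) (phi I d P b) * F.m (phi I d P (a+1)) (phi I d P (b+1))
       - F.m (phi I d P (a+1)) (phi I d P b) * F.m (phi I d P a) (phi I d P (b+1)) = 1
    have hb2 : b ≤ a + P - 1 := by omega
    have hlow : phi I d P a + (b - a) ≤ phi I d P b := mono a b (by omega)
    have hup : phi I d P b ≤ phi I d P a + M - 1 := by
      have hA := mono b ((a-1) + P) (by omega)
      have hB := mono (a-1) a (by omega)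
      have hC := phi_add I d P (by omega) (a-1)
      linarith
    have hup1 : phi I d P (b+1) ≤ phi I d P a + M := by
      have hA := mono (b+1) (a + P) (by omega)
      have hC := phi_add I d P (by omega) a
      linarith
    have hb1up := mono b (b+1) (by omega)
    rcases step a with ha | ⟨t, ha1, ha2⟩
    · rcases step b with hb | ⟨s, hb1, hb2'⟩
      · rw [ha, hb]
        exact F.rule (phi I d P a) (phi I d P b) (by linarith) (by rw [hw]; linarith)
      · rw [ha, hb1, hb2']
        have g1 := gl (phi I d P a) (I + s*M) (by linarith) (by linarith)
        have g2 := gl (phi I d P a + 1) (J + s*M) (by linarith) (by linarith)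
        have g3 := gl (phi I d P a + 1) (I + s*M) (by linarith) (by linarith)
        have g4 := gl (phi I d P a) (J + s*M) (by linarith) (by linarith)
        rw [g1, g2, g3, g4,
            show phi I d P a + 1 + M = phi I d P a + M + 1 by ring]
        have H := det (I + s*M) (J + s*M) (phi I d P a + M)
          (by linarith) (by linarith) (by linarith)
        rw [per1 s] at H
        linear_combination H
    · rcases step b with hb | ⟨s, hb1, hb2'⟩
      · rw [ha1, ha2, hb]
        have hmb := mono (a+1) b (by omega)
        have H := det (I + t*M) (J + t*M) (phi I d P b)
          (by linarith) (by linarith) (by linarith)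
        rw [per1 t] at H
        exact H
      · exfalso
        have e : phi I d P b - phi I d P a = (s - t) * M := by
          rw [ha1, hb1]; ring
        have l1 : 1 ≤ phi I d P b - phi I d P a := by linarith
        have l2 : phi I d P b - phi I d P a ≤ M - 1 := by linarith
        rcases le_or_gt (s - t) 0 with h | h
        · nlinarith
        · nlinarith
  · -- positivity
    intro a b h1 h2
    show 0 < F.m (phi I d P a) (phi I d P b)
    have l1 := mono a b (by omega)
    have l2 := mono b ((a-2) + P) (by omega)
    have l3 := mono (a-2) a (by omega)
    have l4 := phi_add I d P (by omega) (a-2)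
    exact hpos _ _ (by linarith) (by linarith)
  · -- entries
    intro x y hx0 hx1 hy0 hy1
    show F.m (phi I d P x) (phi I d P y) = _
    have key : ∀ z : ℤ, 0 ≤ z → z ≤ M + I - J + 2 →
        phi I d P z = if z ≤ I then z else z + d := by
      intro z hz0 hz1
      by_cases h : z ≤ I
      · rw [if_pos h, phi_formula I d P hP z (-1) (by linarith) (by linarith)]
        ring
      · rw [if_neg h, phi_formula I d P hP z 0 (by linarith) (by linarith)]
        ring
    rw [key x hx0 hx1, key y hy0 hy1]
end CCFAux

/-- Reduction of a Conway–Coxeter frieze at a diagonal of its triangulation: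
let `F` be a CC-frieze of width `m − 3` (all entries in the nontrivial rows
positive) with quiddity `a k = p (k−1) (k+1)`, and suppose the diagonal `[i,j]`
belongs to the triangulation, i.e. `p i j = 1`, where `1 ≤ i`, `i + 2 ≤ j`,
`j ≤ m − 1`. Then `(a_1, …, a_{i−1}, p_{i−1,j}, p_{i,j+1}, a_{j+1}, …, a_m)` is
the quiddity sequence of a Conway–Coxeter frieze of width `m + i − j − 2`. -/
theorem frieze_reduction (m i j : ℕ) (hm : 3 ≤ m)
    (hi : 1 ≤ i) (hij : i + 2 ≤ j) (hjm : j ≤ m - 1)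
    (F : Frieze (m - 3))
    (hpos : ∀ a b : ℤ, a + 2 ≤ b → b ≤ a + ((m - 3 : ℕ) : ℤ) + 1 → 0 < F.m a b)
    (hdiag : F.m (i : ℤ) (j : ℤ) = 1) :
    ∃ F' : Frieze (m + i - j - 2),
      (∀ a b : ℤ, a + 2 ≤ b → b ≤ a + ((m + i - j - 2 : ℕ) : ℤ) + 1 →
        0 < F'.m a b) ∧
      ∀ k : ℕ, 1 ≤ k → k ≤ m + i - j + 1 →
        F'.m ((k : ℤ) - 1) ((k : ℤ) + 1) =
          if k ≤ i - 1 then F.m ((k : ℤ) - 1) ((k : ℤ) + 1)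
          else if k = i then F.m ((i : ℤ) - 1) (j : ℤ)
          else if k = i + 1 then F.m (i : ℤ) ((j : ℤ) + 1)
          else F.m ((k : ℤ) + (j : ℤ) - (i : ℤ) - 2) ((k : ℤ) + (j : ℤ) - (i : ℤ)) := by
  
  obtain ⟨F', hp', hent⟩ := CCFAux.main_aux (m-3) (m+i-j-2) (m:ℤ) (i:ℤ) (j:ℤ)
    (by omega) (by omega) (by omega) (by omega) (by omega) F
    (fun a b h1 h2 => hpos a b h1 (by omega)) hdiag
  refine ⟨F', ?_, ?_⟩
  · intro a b h1 h2
    exact hp' a b h1 (by omega)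
  · intro k hk1 hk2
    have e := hent ((k:ℤ) - 1) ((k:ℤ) + 1) (by omega) (by omega) (by omega) (by omega)
    rw [e]
    by_cases h1 : k ≤ i - 1
    · rw [if_pos h1, if_pos (by omega : (k:ℤ) - 1 ≤ (i:ℤ)),
        if_pos (by omega : (k:ℤ) + 1 ≤ (i:ℤ))]
    · rw [if_neg h1]
      by_cases h2 : k = i
      · subst h2
        rw [if_pos rfl, if_pos (by omega : (k:ℤ) - 1 ≤ (k:ℤ)),
          if_neg (by omega : ¬ ((k:ℤ) + 1 ≤ (k:ℤ)))]
        rw [show (k:ℤ) + 1 + ((j:ℤ) - (k:ℤ) - 1) = (j:ℤ) by ring]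
      · rw [if_neg h2]
        by_cases h3 : k = i + 1
        · subst h3
          rw [if_pos rfl, if_pos (by omega : ((i:ℕ)+1:ℕ) - 1 ≤ (i:ℤ)),
            if_neg (by omega : ¬ (((i:ℕ)+1:ℕ) + 1 ≤ (i:ℤ)))]
          congr 1 <;> push_cast <;> ring
        · rw [if_neg h3, if_neg (by omega : ¬ ((k:ℤ) - 1 ≤ (i:ℤ))),
            if_neg (by omega : ¬ ((k:ℤ) + 1 ≤ (i:ℤ)))]
          congr 1 <;> push_cast <;> ring
end
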